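/- arXiv:2208.03256 — 7 statements merged into one kernel-verified Lean document; each statement's English description precedes it below -/
import Mathlib

section
/- Let R be a commutative ring, let 0 ≤ r ≤ n, and let A be an r × n matrix over R with columns indexed by [n] = {1,…,n}. For J ⊆ [n] with |J| = r let A_J denote the r × r submatrix of A whose columns are those indexed by J, and set Δ(J) = det(A_J) for |J| = r and Δ(J) = 0 for |J| < r. Then for every (r+1)-element subset S ⊆ [n] and every (r−1)-element subset T ⊆ [n], the Grassmann–Plücker relation holds: Σ_{x ∈ S} sign(x; S, T) · Δ(S \ {x}) · Δ(T ∪ {x}) = 0. -/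
open Finset



private lemma negOnePow_congr' {R : Type*} [Ring R] (a b : ℕ) (hab : a % 2 = b % 2) :
    ((-1 : R)) ^ a = (-1) ^ b := by
  conv_lhs => rw [← Nat.div_add_mod a 2]
  conv_rhs => rw [← Nat.div_add_mod b 2]
  rw [hab, pow_add, pow_add, pow_mul, pow_mul, neg_one_sq, one_pow, one_pow]

private lemma orderEmbOfFin_lt_iff' {n m : ℕ} {U : Finset (Fin n)} (h : U.card = m)
    (x : Fin n) (c : Fin m) :
    U.orderEmbOfFin h c < x ↔ (c : ℕ) < (U.filter (· < x)).card := by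
  set f := U.orderEmbOfFin h with hf
  have himg : U.filter (· < x) = (univ.filter fun d : Fin m => f d < x).image ⇑f := by
    ext y
    simp only [mem_filter, mem_image, mem_univ, true_and]
    constructor
    · rintro ⟨hyU, hyx⟩
      have : y ∈ Set.range ⇑f := by rw [hf, Finset.range_orderEmbOfFin]; exact hyU
      obtain ⟨d, rfl⟩ := this
      exact ⟨d, hyx, rfl⟩
    · rintro ⟨d, hd, rfl⟩
      exact ⟨Finset.orderEmbOfFin_mem U h d, hd⟩
  have hcard : (U.filter (· < x)).card = (univ.filter fun d : Fin m => f d < x).card := by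
    rw [himg, card_image_of_injective _ (U.orderEmbOfFin h).injective]
  rw [hcard]
  constructor
  · intro hcx
    have hsub : Finset.Iic c ⊆ univ.filter fun d : Fin m => f d < x := by
      intro d hd
      exact mem_filter.2 ⟨mem_univ _, lt_of_le_of_lt
        ((U.orderEmbOfFin h).monotone (mem_Iic.1 hd)) hcx⟩
    have := card_le_card hsub
    rw [Fin.card_Iic] at this
    omega
  · intro hlt
    by_contra hcx
    push_neg at hcx
    have hsub : (univ.filter fun d : Fin m => f d < x) ⊆ Finset.Iio c := by
      intro d hd
      have hdx : f d < x := (mem_filter.1 hd).2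
      exact mem_Iio.2 ((U.orderEmbOfFin h).lt_iff_lt.1 (lt_of_lt_of_le hdx hcx))
    have := card_le_card hsub
    rw [Fin.card_Iio] at this
    omega

private lemma card_filter_lt_orderEmbOfFin' {n m : ℕ} {U : Finset (Fin n)} (h : U.card = m)
    (j : Fin m) : (U.filter (· < U.orderEmbOfFin h j)).card = (j : ℕ) := by
  set K := (U.filter (· < U.orderEmbOfFin h j)).card with hK
  have H : ∀ c : Fin m, (c : ℕ) < K ↔ (c : ℕ) < (j : ℕ) := by
    intro c
    rw [← orderEmbOfFin_lt_iff' h (U.orderEmbOfFin h j) c, (U.orderEmbOfFin h).lt_iff_lt,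
      Fin.lt_def]
  rcases lt_trichotomy K (j : ℕ) with hlt | heq | hgt
  · have := (H ⟨K, lt_trans hlt j.isLt⟩).2 hlt
    simp only [Fin.val_mk] at this
    omega
  · exact heq
  · exact absurd ((H j).1 hgt) (lt_irrefl _)


/-- partition count -/
private lemma card_filter_lt_add_gt' {n : ℕ} (U : Finset (Fin n)) (x : Fin n) :
    (U.filter (· < x)).card + (U.filter (x < ·)).card + (if x ∈ U then 1 else 0) = U.card := by
  have h0 := Finset.card_filter_add_card_filter_not (s := U) (p := (· < x))
  have h1 : U.filter (fun y => ¬ y < x) = U.filter (x ≤ ·) := by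
    apply filter_congr
    intro y _
    simp [not_lt]
  rw [h1] at h0
  by_cases hx : x ∈ U
  · have h2 : U.filter (x ≤ ·) = insert x (U.filter (x < ·)) := by
      ext y
      simp only [mem_filter, mem_insert]
      constructor
      · rintro ⟨hyU, hxy⟩
        rcases eq_or_lt_of_le hxy with rfl | hlt
        · exact Or.inl rfl
        · exact Or.inr ⟨hyU, hlt⟩
      · rintro (rfl | ⟨hyU, hlt⟩)
        · exact ⟨hx, le_refl _⟩
        · exact ⟨hyU, le_of_lt hlt⟩
    rw [h2, card_insert_of_notMem (by simp [lt_irrefl])] at h0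
    simp only [hx, if_pos]
    omega
  · have h2 : U.filter (x ≤ ·) = U.filter (x < ·) := by
      apply filter_congr
      intro y hy
      have : x ≠ y := fun hxy => hx (hxy ▸ hy)
      constructor
      · intro hle; exact lt_of_le_of_ne hle this
      · exact le_of_lt
    rw [h2] at h0
    simp only [hx, if_neg, if_false]
    omega

/-- inserting a new element: sorted enumeration as a cycle permutation of `cons`. -/
private lemma orderEmbOfFin_insert' {n m : ℕ} {U : Finset (Fin n)} (h : U.card = m)
    {x : Fin n} (hx : x ∉ U) (h' : (insert x U).card = m + 1)
    (hk : (U.filter (· < x)).card < m + 1) :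
    ⇑((insert x U).orderEmbOfFin h') =
      Fin.cons x ⇑(U.orderEmbOfFin h) ∘
        ⇑(Fin.cycleRange (⟨(U.filter (· < x)).card, hk⟩ : Fin (m + 1))) := by
  set k := (U.filter (· < x)).card with hkdef
  set f := U.orderEmbOfFin h with hfdef
  set K : Fin (m + 1) := ⟨k, hk⟩ with hKdef
  set F : Fin (m + 1) → Fin n := Fin.cons x ⇑f ∘ ⇑(Fin.cycleRange K) with hFdef
  have hflt : ∀ d : Fin m, f d < x ↔ (d : ℕ) < k := fun d => orderEmbOfFin_lt_iff' h x d
  have hvlt : ∀ (c : Fin (m + 1)) (hc : (c : ℕ) < k), F c = f ⟨(c : ℕ), by omega⟩ := by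
    intro c hc
    have hcK : c < K := by rw [Fin.lt_def]; exact hc
    have hstep : (c + 1 : Fin (m + 1)) = Fin.succ ⟨(c : ℕ), by omega⟩ := by
      apply Fin.ext
      rw [Fin.val_add_one_of_lt (by rw [Fin.lt_def]; simp; omega)]
      simp
    simp only [hFdef, Function.comp_apply, Fin.cycleRange_of_lt hcK, hstep, Fin.cons_succ]
  have hveq : F K = x := by
    simp only [hFdef, Function.comp_apply, Fin.cycleRange_self, Fin.cons_zero]
  have hvgt : ∀ (c : Fin (m + 1)) (hc : k < (c : ℕ)), F c = f ⟨(c : ℕ) - 1, by omega⟩ := by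
    intro c hc
    have hKc : K < c := by rw [Fin.lt_def]; exact hc
    have hstep : c = Fin.succ ⟨(c : ℕ) - 1, by omega⟩ := by
      apply Fin.ext; simp; omega
    simp only [hFdef, Function.comp_apply, Fin.cycleRange_of_gt hKc]
    have hcs := Fin.cons_succ (α := fun _ => Fin n) x ⇑f ⟨(c : ℕ) - 1, by omega⟩
    exact (congrArg (Fin.cons x ⇑f) hstep).trans hcs
  have hx_lt : ∀ d : Fin m, k ≤ (d : ℕ) → x < f d := by
    intro d hd
    have h1 : ¬ f d < x := by rw [hflt]; omega
    have h2 : f d ≠ x := fun hfd => hx (hfd ▸ Finset.orderEmbOfFin_mem U h d)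
    exact lt_of_le_of_ne (not_lt.1 h1) h2.symm
  have hmono : StrictMono F := by
    intro c c' hcc'
    have hcc'' : (c : ℕ) < (c' : ℕ) := hcc'
    rcases lt_trichotomy (c : ℕ) k with hc | hc | hc <;>
      rcases lt_trichotomy (c' : ℕ) k with hc' | hc' | hc'
    · rw [hvlt c hc, hvlt c' hc']
      exact (U.orderEmbOfFin h).strictMono (by rw [Fin.lt_def]; exact hcc'')
    · rw [hvlt c hc]
      have : c' = K := Fin.ext hc'
      rw [this, hveq]
      exact (hflt _).2 hc
    · rw [hvlt c hc, hvgt c' hc']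
      exact (U.orderEmbOfFin h).strictMono (by rw [Fin.lt_def]; simp; omega)
    · omega
    · omega
    · have : c = K := Fin.ext hc
      rw [this, hveq, hvgt c' hc']
      exact hx_lt _ (by simp; omega)
    · omega
    · omega
    · rw [hvgt c hc, hvgt c' hc']
      exact (U.orderEmbOfFin h).strictMono (by rw [Fin.lt_def]; simp; omega)
  have hmem : ∀ c, F c ∈ insert x U := by
    intro c
    simp only [hFdef, Function.comp_apply]
    rcases Fin.eq_zero_or_eq_succ (Fin.cycleRange K c) with h0 | ⟨d, hd⟩
    · rw [h0, Fin.cons_zero]; exact mem_insert_self _ _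
    · rw [hd, Fin.cons_succ]; exact mem_insert_of_mem (Finset.orderEmbOfFin_mem U h d)
  exact (Finset.orderEmbOfFin_unique h' hmem hmono).symm

/-- `sign(x; S, T) = (-1)^m` where
`m = #{s ∈ S : s > x} + #{t ∈ T : t > x}`. -/
def gpSign {n : ℕ} (x : Fin n) (S T : Finset (Fin n)) : ℤ :=
  (-1) ^ ((S.filter fun s => x < s).card + (T.filter fun t => x < t).card)

/-- The Grassmann–Plücker relations for the maximal minors of an `r × n` matrix over a
commutative ring. -/
theorem grassmann_plucker_relation {R : Type*} [CommRing R] {n r : ℕ} (hrn : r ≤ n)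
    (A : Matrix (Fin r) (Fin n) R) (Δ : Finset (Fin n) → R)
    (hΔdet : ∀ (J : Finset (Fin n)) (h : J.card = r),
      Δ J = (A.submatrix id (J.orderEmbOfFin h)).det)
    (hΔzero : ∀ J : Finset (Fin n), J.card < r → Δ J = 0)
    (S T : Finset (Fin n)) (hS : S.card = r + 1) (hT : T.card + 1 = r) :
    ∑ x ∈ S, (gpSign x S T : R) * Δ (S.erase x) * Δ (insert x T) = 0 := by

  obtain ⟨t, rfl⟩ : ∃ t, r = t + 1 := ⟨T.card, hT.symm⟩
  have ht : T.card = t := by omega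
  set e := S.orderEmbOfFin hS with he
  set f := T.orderEmbOfFin ht with hf
  set N : Fin (t + 2) → Matrix (Fin (t + 1)) (Fin (t + 1)) R :=
    fun j => A.submatrix id (Fin.cons (e j) ⇑f) with hN
  set M : Matrix (Fin (t + 2)) (Fin (t + 2)) R :=
    Matrix.of (fun i j => Fin.cases ((N j).det) (fun i' => A i' (e j)) i) with hM
  have hM0 : ∀ j, M 0 j = (N j).det := by intro j; simp [hM]
  have hMs : ∀ (i : Fin (t + 1)) (j : Fin (t + 2)), M i.succ j = A i (e j) := by
    intro i j; simp [hM]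
  -- Step 1: row 0 of `M` is a linear combination of the other rows
  have hrow : M 0 = ∑ i : Fin (t + 1),
      ((-1 : R) ^ (i : ℕ) * (A.submatrix (Fin.succAbove i) ⇑f).det) • M i.succ := by
    funext j
    rw [Finset.sum_apply]
    rw [hM0 j, Matrix.det_succ_column_zero]
    refine Finset.sum_congr rfl fun i _ => ?_
    have h2 : (N j) i 0 = A i (e j) := by simp [hN]
    have h3 : (N j).submatrix (Fin.succAbove i) Fin.succ
        = A.submatrix (Fin.succAbove i) ⇑f := by
      ext i' c; simp [hN]
    rw [h2, h3, Pi.smul_apply, hMs i j, smul_eq_mul]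
    ring
  -- Step 2: `det M = 0`
  have hdetM : M.det = 0 := by
    set c : Fin (t + 2) → R := Fin.cases 0
      (fun i => (-1 : R) ^ (i : ℕ) * (A.submatrix (Fin.succAbove i) ⇑f).det) with hc
    have hsum : M 0 = ∑ i : Fin (t + 2), c i • M i := by
      rw [Fin.sum_univ_succ]
      simp only [hc, Fin.cases_zero, zero_smul, zero_add, Fin.cases_succ]
      exact hrow
    have hupd := Matrix.det_updateRow_sum M 0 c
    rw [← hsum, Matrix.updateRow_eq_self] at hupd
    rw [hupd]
    simp [hc]
  -- Step 3: Laplace expansion of `det M` along row 0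
  have hLap := Matrix.det_succ_row_zero M
  rw [hdetM] at hLap
  -- Step 4: reindex the sum over `S` by `Fin (t+2)`
  have hSimage : S = Finset.image (⇑e) Finset.univ := by
    ext y
    simp only [Finset.mem_image, Finset.mem_univ, true_and]
    constructor
    · intro hy
      have : y ∈ Set.range ⇑e := by rw [he, Finset.range_orderEmbOfFin]; exact hy
      obtain ⟨j, rfl⟩ := this
      exact ⟨j, rfl⟩
    · rintro ⟨j, rfl⟩
      exact Finset.orderEmbOfFin_mem S hS j
  have hreindex := Finset.sum_image (s := (Finset.univ : Finset (Fin (t + 2)))) (g := ⇑e)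
    (f := fun x => (gpSign x S T : R) * Δ (S.erase x) * Δ (insert x T))
    (fun a _ b _ hab => e.injective hab)
  rw [← hSimage] at hreindex
  rw [hreindex]
  -- Step 5: the termwise identity
  have hterm : ∀ j : Fin (t + 2),
      (gpSign (e j) S T : R) * Δ (S.erase (e j)) * Δ (insert (e j) T) =
      -((-1 : R) ^ (j : ℕ) * M 0 j * (M.submatrix Fin.succ (Fin.succAbove j)).det) := by
    intro j
    have hxS : e j ∈ S := Finset.orderEmbOfFin_mem S hS j
    have hMsub : M.submatrix Fin.succ (Fin.succAbove j)
        = A.submatrix id (⇑e ∘ Fin.succAbove j) := by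
      ext i c
      rw [Matrix.submatrix_apply, hMs, Matrix.submatrix_apply]
      rfl
    have hcardE : (S.erase (e j)).card = t + 1 := by
      rw [Finset.card_erase_of_mem hxS, hS]
      omega
    have hEfun : ⇑((S.erase (e j)).orderEmbOfFin hcardE) = ⇑e ∘ Fin.succAbove j := by
      refine (Finset.orderEmbOfFin_unique hcardE ?_ ?_).symm
      · intro c
        refine Finset.mem_erase.2 ⟨?_, Finset.orderEmbOfFin_mem S hS _⟩
        intro hEq
        exact Fin.succAbove_ne j c (e.injective hEq)
      · exact e.strictMono.comp (Fin.strictMono_succAbove j)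
    have hErase : Δ (S.erase (e j)) = (M.submatrix Fin.succ (Fin.succAbove j)).det := by
      rw [hΔdet _ hcardE, hMsub]
      congr 1
      ext i c
      simp [hEfun]
    rw [hErase, hM0 j]
    by_cases hxT : e j ∈ T
    · have h1 : Δ (insert (e j) T) = 0 := by
        rw [Finset.insert_eq_self.2 hxT]
        exact hΔzero T (by omega)
      have hrange : e j ∈ Set.range ⇑f := by rw [hf, Finset.range_orderEmbOfFin]; exact hxT
      obtain ⟨d, hd⟩ := hrange
      have h2 : (N j).det = 0 := by
        refine Matrix.det_zero_of_column_eq (i := (0 : Fin (t + 1))) (j := d.succ)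
          (Fin.succ_ne_zero d).symm fun i => ?_
        simp [hN, hd]
      rw [h1, h2]
      ring
    · set k := (T.filter (· < e j)).card with hk
      have hkle : k ≤ t := by
        have hsub := Finset.card_le_card (Finset.filter_subset (· < e j) T)
        omega
      have hcardI : (insert (e j) T).card = t + 1 := by
        rw [Finset.card_insert_of_notMem hxT, ht]
      have hins : Δ (insert (e j) T)
          = (A.submatrix id ⇑((insert (e j) T).orderEmbOfFin hcardI)).det := hΔdet _ hcardI
      have hgfun := orderEmbOfFin_insert' ht hxT hcardI (by omega)
      have hdet1 : (A.submatrix id ⇑((insert (e j) T).orderEmbOfFin hcardI)).det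
          = ((-1 : R) ^ k) * (N j).det := by
        have hsubm : A.submatrix id ⇑((insert (e j) T).orderEmbOfFin hcardI)
            = (N j).submatrix id ⇑(Fin.cycleRange (⟨k, by omega⟩ : Fin (t + 1))) := by
          ext i c
          rw [Matrix.submatrix_apply, Matrix.submatrix_apply, hgfun]
          rfl
        rw [hsubm, Matrix.det_permute', Fin.sign_cycleRange]
        push_cast
        norm_num
      have ha : (S.filter (fun s => e j < s)).card + (j : ℕ) + 1 = t + 2 := by
        have h1 := card_filter_lt_add_gt' S (e j)
        rw [if_pos hxS, hS] at h1
        have h2 : (S.filter (· < e j)).card = (j : ℕ) := card_filter_lt_orderEmbOfFin' hS j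
        omega
      have hb : (T.filter (fun s => e j < s)).card + k = t := by
        have h1 := card_filter_lt_add_gt' T (e j)
        rw [if_neg hxT, ht] at h1
        omega
      have hsign : ((gpSign (e j) S T : ℤ) : R) * (-1 : R) ^ k = -(-1 : R) ^ (j : ℕ) := by
        rw [gpSign]
        push_cast
        rw [← pow_add]
        have hneg : (-(-1 : R) ^ (j : ℕ)) = (-1 : R) ^ ((j : ℕ) + 1) := by
          rw [pow_succ]; ring
        rw [hneg]
        exact negOnePow_congr' _ _ (by omega)
      rw [hins, hdet1]
      linear_combination ((M.submatrix Fin.succ (Fin.succAbove j)).det * (N j).det) * hsign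
  calc ∑ j : Fin (t + 2), (gpSign (e j) S T : R) * Δ (S.erase (e j)) * Δ (insert (e j) T)
      = ∑ j : Fin (t + 2),
        -((-1 : R) ^ (j : ℕ) * M 0 j * (M.submatrix Fin.succ (Fin.succAbove j)).det) :=
        Finset.sum_congr rfl fun j _ => hterm j
    _ = -∑ j : Fin (t + 2),
        (-1 : R) ^ (j : ℕ) * M 0 j * (M.submatrix Fin.succ (Fin.succAbove j)).det := by
        rw [Finset.sum_neg_distrib]
    _ = 0 := by rw [← hLap, neg_zero]
end

section
/- Let P = (G, R) be a partial field, let 0 ≤ r ≤ n, and suppose p is a function assigning to each r-element subset J of [n] a value p(J) ∈ G ∪ {0}, not all zero, satisfying all Grassmann–Plücker equations over R. Then there exist a field k and a function q assigning to each r-element subset J of [n] a value q(J) ∈ k, not all zero, satisfying all Grassmann–Plücker equations over k, with the same support: {J : q(J) ≠ 0} = {J : p(J) ≠ 0}. In particular, every matroid representable over a partial field is representable over some field. -/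
open Finset

/-- `p` satisfies all Grassmann–Plücker equations of rank `r`. -/
def SatisfiesGP {k : Type*} [CommRing k] {n : ℕ} (r : ℕ) (p : Finset (Fin n) → k) : Prop :=
  ∀ S T : Finset (Fin n), S.card = r + 1 → T.card + 1 = r →
    ∑ x ∈ S, (gpSign x S T : k) * p (S.erase x) * p (insert x T) = 0

/-- `a` is an element of the partial field `(G, R)`, i.e. `a ∈ G ∪ {0}`. -/
def PFElem {R : Type*} [CommRing R] (G : Subgroup Rˣ) (a : R) : Prop :=
  a = 0 ∨ ∃ u : Rˣ, u ∈ G ∧ (u : R) = a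


lemma exists_residue_field_hom {A : Type} [CommRing A] {R : Type*} [CommRing R]
    (φ : A →+* R) (m : Ideal R) (hm : m.IsMaximal) :
    ∃ (k : Type) (_ : Field k) (ψ : A →+* k), ∀ a : A, ψ a = 0 ↔ φ a ∈ m := by
  haveI : (m.comap φ).IsPrime := Ideal.IsPrime.comap φ (hK := hm.isPrime)
  refine ⟨FractionRing (A ⧸ m.comap φ), inferInstance,
    (algebraMap (A ⧸ m.comap φ) (FractionRing (A ⧸ m.comap φ))).comp
      (Ideal.Quotient.mk (m.comap φ)), fun a => ?_⟩
  rw [RingHom.comp_apply]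
  constructor
  · intro h
    have h0 : Ideal.Quotient.mk (m.comap φ) a = 0 := by
      apply IsFractionRing.injective (A ⧸ m.comap φ) (FractionRing (A ⧸ m.comap φ))
      simpa using h
    exact Ideal.mem_comap.mp (Ideal.Quotient.eq_zero_iff_mem.mp h0)
  · intro h
    rw [Ideal.Quotient.eq_zero_iff_mem.mpr (Ideal.mem_comap.mpr h), map_zero]

theorem plucker_vector_over_partial_field_to_field {R : Type*} [CommRing R]
    (G : Subgroup Rˣ) (hG : (-1 : Rˣ) ∈ G) {n r : ℕ} (hrn : r ≤ n)
    (p : Finset (Fin n) → R)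
    (hval : ∀ J : Finset (Fin n), PFElem G (p J))
    (hp0 : ∀ J : Finset (Fin n), J.card ≠ r → p J = 0)
    (hne : ∃ J : Finset (Fin n), p J ≠ 0)
    (hGP : SatisfiesGP r p) :
    ∃ (k : Type) (fld : Field k) (q : Finset (Fin n) → k),
      (∃ J : Finset (Fin n), q J ≠ 0) ∧
      (letI := fld; SatisfiesGP r q) ∧
      (∀ J : Finset (Fin n), q J ≠ 0 ↔ p J ≠ 0) := by
  classical
  obtain ⟨J0, hJ0⟩ := hne
  haveI : Nontrivial R := nontrivial_of_ne _ _ hJ0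
  obtain ⟨m, hm⟩ := Ideal.exists_maximal R
  obtain ⟨k, fld, ψ, hmem⟩ :=
    exists_residue_field_hom ((MvPolynomial.aeval p).toRingHom :
      MvPolynomial (Finset (Fin n)) ℤ →+* R) m hm
  have hψX : ∀ J : Finset (Fin n),
      ((MvPolynomial.aeval p).toRingHom : MvPolynomial (Finset (Fin n)) ℤ →+* R) (MvPolynomial.X J) = p J := by
    intro J; simp
  have hsup : ∀ J : Finset (Fin n), ψ (MvPolynomial.X J) ≠ 0 ↔ p J ≠ 0 := by
    intro J
    rw [not_iff_not, hmem, hψX]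
    constructor
    · intro h
      by_contra hpJ
      obtain ⟨u, -, hu⟩ := (hval J).resolve_left hpJ
      exact hm.ne_top (Ideal.eq_top_of_isUnit_mem m h (hu ▸ u.isUnit))
    · intro h
      rw [h]; exact m.zero_mem
  refine ⟨k, fld, fun J => ψ (MvPolynomial.X J), ⟨J0, (hsup J0).mpr hJ0⟩, ?_, hsup⟩
  intro S T hS hT
  have hz : ψ (∑ x ∈ S, (gpSign x S T : MvPolynomial (Finset (Fin n)) ℤ) *
      MvPolynomial.X (S.erase x) * MvPolynomial.X (insert x T)) = 0 := by
    rw [hmem, map_sum]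
    have : (∑ x ∈ S, ((MvPolynomial.aeval p).toRingHom : MvPolynomial (Finset (Fin n)) ℤ →+* R)
        ((gpSign x S T : MvPolynomial (Finset (Fin n)) ℤ) *
          MvPolynomial.X (S.erase x) * MvPolynomial.X (insert x T))) = 0 := by
      rw [← hGP S T hS hT]
      refine Finset.sum_congr rfl fun x hx => ?_
      rw [map_mul, map_mul, map_intCast, hψX, hψX]
    rw [this]; exact m.zero_mem
  rw [map_sum] at hz
  rw [← hz]
  refine Finset.sum_congr rfl fun x hx => ?_
  rw [map_mul, map_mul, map_intCast]
end

section
/- Let M be a matroid on ground set [n] and let 𝓑 be its collection of bases. Then 𝓑 is an orthogonal matroid on [n]: 𝓑 is nonempty, and for all bases B₁, B₂ of M and every x₁ ∈ B₁ Δ B₂, there exists x₂ ∈ B₁ Δ B₂ with x₂ ≠ x₁ such that B₁ Δ {x₁, x₂} is a basis of M. -/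
open Finset
open scoped symmDiff

/-- An orthogonal matroid on `[n]`: a nonempty collection `𝓑` of subsets of `[n]` satisfying
the symmetric exchange axiom. -/
def IsOrthogonalMatroid {n : ℕ} (𝓑 : Set (Finset (Fin n))) : Prop :=
  𝓑.Nonempty ∧
    ∀ B₁ ∈ 𝓑, ∀ B₂ ∈ 𝓑, ∀ x₁ ∈ B₁ ∆ B₂,
      ∃ x₂ ∈ B₁ ∆ B₂, x₂ ≠ x₁ ∧ B₁ ∆ ({x₁, x₂} : Finset (Fin n)) ∈ 𝓑

theorem matroid_is_orthogonal_matroid {n : ℕ} (M : Matroid (Fin n)) (hE : M.E = Set.univ) :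
    IsOrthogonalMatroid {J : Finset (Fin n) | M.IsBase ↑J} := by
  classical
  constructor
  · obtain ⟨B, hB⟩ := M.exists_isBase
    exact ⟨(Set.toFinite B).toFinset, by simpa [Set.Finite.coe_toFinset] using hB⟩
  intro B₁ hB₁ B₂ hB₂ x₁ hx₁
  simp only [Set.mem_setOf_eq] at hB₁ hB₂
  rw [Finset.mem_symmDiff] at hx₁
  rcases hx₁ with ⟨h₁, h₂⟩ | ⟨h₂, h₁⟩
  · obtain ⟨f, hf, hBase⟩ := hB₁.exchange hB₂ ⟨h₁, h₂⟩
    obtain ⟨hf₂, hf₁⟩ := hf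
    refine ⟨f, ?_, fun h => hf₁ (h ▸ h₁), ?_⟩
    · rw [Finset.mem_symmDiff]; exact Or.inr ⟨hf₂, hf₁⟩
    · show M.IsBase _
      convert hBase using 1
      ext y
      simp only [Finset.coe_symmDiff, Set.mem_symmDiff, Finset.coe_insert, Finset.coe_singleton,
        Set.mem_insert_iff, Set.mem_singleton_iff, Finset.mem_coe, Set.mem_diff]
      by_cases hy₁ : y = x₁ <;> by_cases hyf : y = f <;>
        subst_vars <;> simp_all
  · -- dual case: x₁ ∈ B₂ \ B₁
    have hC₁ : M✶.IsBase (Set.univ \ ↑B₁) := by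
      rw [Matroid.dual_isBase_iff (by rw [hE]; exact Set.diff_subset)]
      rw [hE, Set.diff_diff_cancel_left (Set.subset_univ _)]
      exact hB₁
    have hC₂ : M✶.IsBase (Set.univ \ ↑B₂) := by
      rw [Matroid.dual_isBase_iff (by rw [hE]; exact Set.diff_subset)]
      rw [hE, Set.diff_diff_cancel_left (Set.subset_univ _)]
      exact hB₂
    obtain ⟨f, hf, hBase⟩ := hC₁.exchange hC₂ ⟨⟨Set.mem_univ _, h₁⟩, fun h => h.2 h₂⟩
    obtain ⟨hf₂, hf₁⟩ := hf
    have hfB₁ : f ∈ B₁ := by by_contra h; exact hf₁ ⟨Set.mem_univ _, h⟩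
    have hfB₂ : f ∉ B₂ := hf₂.2
    have hne : f ≠ x₁ := fun h => hfB₂ (h ▸ h₂)
    refine ⟨f, ?_, hne, ?_⟩
    · rw [Finset.mem_symmDiff]; exact Or.inl ⟨hfB₁, hfB₂⟩
    · show M.IsBase _
      have := hBase
      rw [Matroid.dual_isBase_iff (by rw [hE]; exact Set.subset_univ _),
        hE] at this
      convert this using 1
      ext y
      simp only [Finset.coe_symmDiff, Set.mem_symmDiff, Finset.coe_insert, Finset.coe_singleton,
        Set.mem_insert_iff, Set.mem_singleton_iff, Finset.mem_coe, Set.mem_diff, Set.mem_univ,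
        true_and]
      by_cases hy₁ : y = x₁ <;> by_cases hyf : y = f <;>
        subst_vars <;> simp_all
end

section
/- Let 𝓑 be an orthogonal matroid on [n]. Then 𝓑 satisfies the strong symmetric exchange axiom: for all B₁, B₂ ∈ 𝓑 and every x₁ ∈ B₁ Δ B₂, there exists x₂ ∈ B₁ Δ B₂ with x₂ ≠ x₁ such that both B₁ Δ {x₁, x₂} ∈ 𝓑 and B₂ Δ {x₁, x₂} ∈ 𝓑. -/
open Finset
open scoped symmDiff

namespace StrongExchangeAux

variable {n : ℕ}

lemma sd_pair_eq_sdiff {D : Finset (Fin n)} {a b : Fin n} (ha : a ∈ D) (hb : b ∈ D) :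
    D ∆ ({a, b} : Finset (Fin n)) = D \ {a, b} := by
  ext i
  simp only [Finset.mem_symmDiff, Finset.mem_sdiff, Finset.mem_insert, Finset.mem_singleton]
  constructor
  · rintro (⟨h1, h2⟩ | ⟨h1, h2⟩)
    · exact ⟨h1, h2⟩
    · rcases h1 with rfl | rfl
      · exact absurd ha h2
      · exact absurd hb h2
  · exact fun h => Or.inl h

lemma card_sd_pair {D : Finset (Fin n)} {a b : Fin n} (ha : a ∈ D) (hb : b ∈ D) (hab : a ≠ b) :
    (D ∆ ({a, b} : Finset (Fin n))).card = D.card - 2 := by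
  have hsub : ({a, b} : Finset (Fin n)) ⊆ D := by
    intro i hi
    simp only [mem_insert, mem_singleton] at hi
    rcases hi with rfl | rfl <;> assumption
  rw [sd_pair_eq_sdiff ha hb, card_sdiff_of_subset hsub, card_pair hab]

lemma mem_of_mem_sd_pair {D : Finset (Fin n)} {a b s : Fin n} (ha : a ∈ D) (hb : b ∈ D)
    (hs : s ∈ D ∆ ({a, b} : Finset (Fin n))) : s ∈ D ∧ s ≠ a ∧ s ≠ b := by
  rw [sd_pair_eq_sdiff ha hb, mem_sdiff] at hs
  simp only [mem_insert, mem_singleton] at hs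
  push_neg at hs
  exact ⟨hs.1, hs.2.1, hs.2.2⟩

lemma quad_sdiff_pair {x v t r : Fin n} (hvx : v ≠ x) (htx : t ≠ x) (hrx : r ≠ x)
    (htv : t ≠ v) (hrv : r ≠ v) (hrt : r ≠ t) :
    ({x, v, t, r} : Finset (Fin n)) \ ({v, t} : Finset (Fin n)) = {x, r} := by
  ext i
  by_cases e1 : i = x <;> by_cases e2 : i = v <;> by_cases e3 : i = t <;> by_cases e4 : i = r <;>
    simp_all

lemma triple_sdiff_pair {x v u : Fin n} (hvx : v ≠ x) (hux : u ≠ x) (huv : u ≠ v) :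
    ({x, v, u} : Finset (Fin n)) \ ({v, u} : Finset (Fin n)) = {x} := by
  ext i
  by_cases e1 : i = x <;> by_cases e2 : i = v <;> by_cases e3 : i = u <;> simp_all

lemma card_four {a b c d : Fin n} (hab : a ≠ b) (hac : a ≠ c) (had : a ≠ d)
    (hbc : b ≠ c) (hbd : b ≠ d) (hcd : c ≠ d) :
    ({a, b, c, d} : Finset (Fin n)).card = 4 := by
  rw [card_insert_of_notMem (by simp [hab, hac, had]),
    card_insert_of_notMem (by simp [hbc, hbd]), card_pair hcd]

lemma pair_sd_pair {x a b s : Fin n} (h1 : a ≠ x) (h2 : b ≠ x) (h3 : s ≠ x) (h4 : a ≠ b)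
    (h5 : s ≠ a) (h6 : s ≠ b) :
    ({a, b} : Finset (Fin n)) ∆ {x, s} = {x, a, b, s} := by
  ext i
  by_cases e1 : i = x <;> by_cases e2 : i = a <;> by_cases e3 : i = b <;> by_cases e4 : i = s <;>
    simp_all [Finset.mem_symmDiff]

lemma quad_sd_pair {x a b s : Fin n} (h1 : a ≠ x) (h2 : b ≠ x) (h3 : s ≠ x) (h4 : a ≠ b)
    (h5 : s ≠ a) (h6 : s ≠ b) :
    ({x, a, b, s} : Finset (Fin n)) ∆ {x, b} = {a, s} := by
  ext i
  by_cases e1 : i = x <;> by_cases e2 : i = a <;> by_cases e3 : i = b <;> by_cases e4 : i = s <;>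
    simp_all [Finset.mem_symmDiff]

variable {𝓑 : Set (Finset (Fin n))}

/-- The "climb–descend" step used in the induction for `|B₁ ∆ B₂| ≥ 5`. -/
lemma climb_descend
    (hax : ∀ B₁ ∈ 𝓑, ∀ B₂ ∈ 𝓑, ∀ x₁ ∈ B₁ ∆ B₂,
      ∃ x₂ ∈ B₁ ∆ B₂, x₂ ≠ x₁ ∧ B₁ ∆ ({x₁, x₂} : Finset (Fin n)) ∈ 𝓑)
    {B₁ B₂ : Finset (Fin n)} (hB₁ : B₁ ∈ 𝓑) (hB₂ : B₂ ∈ 𝓑)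
    (IH : ∀ C₁ ∈ 𝓑, ∀ C₂ ∈ 𝓑, (C₁ ∆ C₂).card < (B₁ ∆ B₂).card → ∀ x ∈ C₁ ∆ C₂,
      ∃ y ∈ C₁ ∆ C₂, y ≠ x ∧ C₁ ∆ ({x, y} : Finset (Fin n)) ∈ 𝓑 ∧
        C₂ ∆ ({x, y} : Finset (Fin n)) ∈ 𝓑)
    (h5 : 5 ≤ (B₁ ∆ B₂).card)
    {x₁ a b : Fin n} (hx₁ : x₁ ∈ B₁ ∆ B₂) (ha : a ∈ B₁ ∆ B₂) (hb : b ∈ B₁ ∆ B₂)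
    (hax₁ : a ≠ x₁) (hbx₁ : b ≠ x₁) (hab : a ≠ b)
    (hVa : B₁ ∆ ({x₁, a} : Finset (Fin n)) ∈ 𝓑)
    (hedge : B₂ ∆ ({a, b} : Finset (Fin n)) ∈ 𝓑) :
    (∃ x₂ ∈ B₁ ∆ B₂, x₂ ≠ x₁ ∧ B₁ ∆ ({x₁, x₂} : Finset (Fin n)) ∈ 𝓑 ∧
        B₂ ∆ ({x₁, x₂} : Finset (Fin n)) ∈ 𝓑) ∨
      (B₂ ∆ ({x₁, b} : Finset (Fin n)) ∈ 𝓑 ∧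
        ∃ s ∈ B₁ ∆ B₂, s ≠ x₁ ∧ s ≠ a ∧ s ≠ b ∧ B₁ ∆ ({x₁, s} : Finset (Fin n)) ∈ 𝓑 ∧
          B₂ ∆ ({a, s} : Finset (Fin n)) ∈ 𝓑) := by
  -- climb: apply IH to (B₁, B₂ ∆ {a,b})
  have hD' : B₁ ∆ (B₂ ∆ ({a, b} : Finset (Fin n))) = (B₁ ∆ B₂) ∆ {a, b} :=
    (symmDiff_assoc _ _ _).symm
  have hcard' : (B₁ ∆ (B₂ ∆ ({a, b} : Finset (Fin n)))).card < (B₁ ∆ B₂).card := by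
    rw [hD', card_sd_pair ha hb hab]; omega
  have hx₁' : x₁ ∈ B₁ ∆ (B₂ ∆ ({a, b} : Finset (Fin n))) := by
    rw [hD', sd_pair_eq_sdiff ha hb, mem_sdiff]
    refine ⟨hx₁, ?_⟩
    simp only [mem_insert, mem_singleton]
    push_neg
    exact ⟨Ne.symm hax₁, Ne.symm hbx₁⟩
  obtain ⟨s, hsmem, hsx₁, hBs, hXs⟩ := IH B₁ hB₁ _ hedge hcard' x₁ hx₁'
  obtain ⟨hsD, hsa, hsb⟩ := mem_of_mem_sd_pair ha hb (hD' ▸ hsmem)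
  have hXQ : (B₂ ∆ ({a, b} : Finset (Fin n))) ∆ ({x₁, s} : Finset (Fin n)) =
      B₂ ∆ ({x₁, a, b, s} : Finset (Fin n)) := by
    rw [symmDiff_assoc, pair_sd_pair hax₁ hbx₁ hsx₁ hab hsa hsb]
  rw [hXQ] at hXs
  -- descend: apply IH to (B₂ ∆ {x₁,a,b,s}, B₂)
  have hXB₂ : (B₂ ∆ ({x₁, a, b, s} : Finset (Fin n))) ∆ B₂ = {x₁, a, b, s} := by
    rw [symmDiff_comm B₂ _, symmDiff_symmDiff_cancel_right]
  have hx₁Q : x₁ ∈ (B₂ ∆ ({x₁, a, b, s} : Finset (Fin n))) ∆ B₂ := by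
    rw [hXB₂]; simp
  have hcQ : ((B₂ ∆ ({x₁, a, b, s} : Finset (Fin n))) ∆ B₂).card < (B₁ ∆ B₂).card := by
    rw [hXB₂, card_four (Ne.symm hax₁) (Ne.symm hbx₁) (Ne.symm hsx₁) hab (Ne.symm hsa)
      (Ne.symm hsb)]
    omega
  obtain ⟨q, hqmem, hqx₁, hXq, hB₂q⟩ := IH _ hXs B₂ hB₂ hcQ x₁ hx₁Q
  rw [hXB₂] at hqmem
  have hq : q = a ∨ q = b ∨ q = s := by
    simp only [mem_insert, mem_singleton] at hqmem
    tauto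
  rcases hq with rfl | rfl | rfl
  · exact Or.inl ⟨q, ha, hax₁, hVa, hB₂q⟩
  · refine Or.inr ⟨hB₂q, s, hsD, hsx₁, hsa, hsb, hBs, ?_⟩
    have h2 : (B₂ ∆ ({x₁, a, q, s} : Finset (Fin n))) ∆ ({x₁, q} : Finset (Fin n)) =
        B₂ ∆ ({a, s} : Finset (Fin n)) := by
      rw [symmDiff_assoc, quad_sd_pair hax₁ hqx₁ hsx₁ hab hsa hsb]
    rwa [h2] at hXq
  · exact Or.inl ⟨q, hsD, hsx₁, hBs, hB₂q⟩

/-- The case `|B₁ ∆ B₂| = 4`: produce two distinct `B₁`-exchangeable elements (or finish). -/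
lemma two_V
    (hax : ∀ B₁ ∈ 𝓑, ∀ B₂ ∈ 𝓑, ∀ x₁ ∈ B₁ ∆ B₂,
      ∃ x₂ ∈ B₁ ∆ B₂, x₂ ≠ x₁ ∧ B₁ ∆ ({x₁, x₂} : Finset (Fin n)) ∈ 𝓑)
    {B₁ B₂ : Finset (Fin n)} (hB₁ : B₁ ∈ 𝓑) (hB₂ : B₂ ∈ 𝓑)
    (hc : (B₁ ∆ B₂).card = 4) {x₁ : Fin n} (hx₁ : x₁ ∈ B₁ ∆ B₂) :
    (∃ x₂ ∈ B₁ ∆ B₂, x₂ ≠ x₁ ∧ B₁ ∆ ({x₁, x₂} : Finset (Fin n)) ∈ 𝓑 ∧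
        B₂ ∆ ({x₁, x₂} : Finset (Fin n)) ∈ 𝓑) ∨
      ∃ v r : Fin n, v ∈ B₁ ∆ B₂ ∧ r ∈ B₁ ∆ B₂ ∧ v ≠ x₁ ∧ r ≠ x₁ ∧ v ≠ r ∧
        B₁ ∆ ({x₁, v} : Finset (Fin n)) ∈ 𝓑 ∧ B₁ ∆ ({x₁, r} : Finset (Fin n)) ∈ 𝓑 := by
  obtain ⟨v, hvD, hvx, hv⟩ := hax B₁ hB₁ B₂ hB₂ x₁ hx₁
  obtain ⟨t, htD', htv, ht⟩ := hax B₂ hB₂ B₁ hB₁ v (by rwa [symmDiff_comm])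
  have htD : t ∈ B₁ ∆ B₂ := by rwa [symmDiff_comm] at htD'
  by_cases htx : t = x₁
  · subst htx
    exact Or.inl ⟨v, hvD, hvx, hv, by rwa [pair_comm] at ht⟩
  · have hsub : ({x₁, v, t} : Finset (Fin n)) ⊆ B₁ ∆ B₂ := by
      intro i hi
      simp only [mem_insert, mem_singleton] at hi
      rcases hi with rfl | rfl | rfl <;> assumption
    have hcard3 : ({x₁, v, t} : Finset (Fin n)).card = 3 := by
      rw [card_insert_of_notMem (by simp [Ne.symm hvx, Ne.symm htx]),
        card_pair (Ne.symm htv)]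
    have hone : ((B₁ ∆ B₂) \ ({x₁, v, t} : Finset (Fin n))).card = 1 := by
      rw [card_sdiff_of_subset hsub, hc, hcard3]
    obtain ⟨r, hr⟩ := card_eq_one.mp hone
    have hrmem : r ∈ (B₁ ∆ B₂) \ ({x₁, v, t} : Finset (Fin n)) := hr ▸ mem_singleton_self r
    rw [mem_sdiff] at hrmem
    obtain ⟨hrD, hrn⟩ := hrmem
    simp only [mem_insert, mem_singleton] at hrn
    push_neg at hrn
    obtain ⟨hrx, hrv, hrt⟩ := hrn
    have hD4 : B₁ ∆ B₂ = ({x₁, v, t, r} : Finset (Fin n)) := by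
      symm
      apply eq_of_subset_of_card_le
      · intro i hi
        simp only [mem_insert, mem_singleton] at hi
        rcases hi with rfl | rfl | rfl | rfl <;> assumption
      · rw [hc, card_four (Ne.symm hvx) (Ne.symm htx) (Ne.symm hrx) (Ne.symm htv)
          (Ne.symm hrv) (Ne.symm hrt)]
    have hkey : B₂ ∆ ({v, t} : Finset (Fin n)) = B₁ ∆ ({x₁, r} : Finset (Fin n)) := by
      have h1 : B₂ = B₁ ∆ (B₁ ∆ B₂) := (symmDiff_symmDiff_cancel_left _ _).symm
      rw [h1, symmDiff_assoc]
      congr 1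
      rw [sd_pair_eq_sdiff hvD htD, hD4,
        quad_sdiff_pair hvx htx hrx htv hrv hrt]
    rw [hkey] at ht
    exact Or.inr ⟨v, r, hvD, hrD, hvx, hrx, Ne.symm hrv, hv, ht⟩

lemma key
    (hax : ∀ B₁ ∈ 𝓑, ∀ B₂ ∈ 𝓑, ∀ x₁ ∈ B₁ ∆ B₂,
      ∃ x₂ ∈ B₁ ∆ B₂, x₂ ≠ x₁ ∧ B₁ ∆ ({x₁, x₂} : Finset (Fin n)) ∈ 𝓑) :
    ∀ d : ℕ, ∀ B₁ ∈ 𝓑, ∀ B₂ ∈ 𝓑, (B₁ ∆ B₂).card ≤ d → ∀ x₁ ∈ B₁ ∆ B₂,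
      ∃ x₂ ∈ B₁ ∆ B₂, x₂ ≠ x₁ ∧ B₁ ∆ ({x₁, x₂} : Finset (Fin n)) ∈ 𝓑 ∧
        B₂ ∆ ({x₁, x₂} : Finset (Fin n)) ∈ 𝓑 := by
  intro d
  induction d with
  | zero =>
    intro B₁ hB₁ B₂ hB₂ hc x₁ hx₁
    rw [Nat.le_zero, card_eq_zero] at hc
    rw [hc] at hx₁
    exact absurd hx₁ (notMem_empty x₁)
  | succ d IH =>
    intro B₁ hB₁ B₂ hB₂ hc x₁ hx₁
    have hB₂eq : B₁ ∆ (B₁ ∆ B₂) = B₂ := symmDiff_symmDiff_cancel_left _ _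
    have hB₁eq : B₂ ∆ (B₁ ∆ B₂) = B₁ := by
      rw [symmDiff_comm B₁ B₂]
      exact symmDiff_symmDiff_cancel_left _ _
    rcases lt_or_ge (B₁ ∆ B₂).card 5 with hlt | hge
    · -- small cases
      have hcases : (B₁ ∆ B₂).card ≤ 1 ∨ (B₁ ∆ B₂).card = 2 ∨ (B₁ ∆ B₂).card = 3 ∨
          (B₁ ∆ B₂).card = 4 := by omega
      rcases hcases with h1 | h2 | h3 | h4
      · -- impossible: the axiom gives a second element of the symmetric difference
        obtain ⟨x₂, hx₂, hne, -⟩ := hax B₁ hB₁ B₂ hB₂ x₁ hx₁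
        have : 1 < (B₁ ∆ B₂).card := one_lt_card.mpr ⟨x₂, hx₂, x₁, hx₁, hne⟩
        omega
      · -- |Δ| = 2
        have he : ((B₁ ∆ B₂).erase x₁).card = 1 := by
          rw [card_erase_of_mem hx₁, h2]
        obtain ⟨y, hy⟩ := card_eq_one.mp he
        have hymem : y ∈ (B₁ ∆ B₂).erase x₁ := hy ▸ mem_singleton_self y
        rw [mem_erase] at hymem
        obtain ⟨hyx, hyD⟩ := hymem
        have hpair : ({x₁, y} : Finset (Fin n)) = B₁ ∆ B₂ := by
          apply eq_of_subset_of_card_le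
          · intro i hi
            simp only [mem_insert, mem_singleton] at hi
            rcases hi with rfl | rfl <;> assumption
          · rw [h2, card_pair (Ne.symm hyx)]
        exact ⟨y, hyD, hyx, by rw [hpair, hB₂eq]; exact hB₂,
          by rw [hpair, hB₁eq]; exact hB₁⟩
      · -- |Δ| = 3
        obtain ⟨v, hvD, hvx, hv⟩ := hax B₁ hB₁ B₂ hB₂ x₁ hx₁
        obtain ⟨u, huD', hux, hu⟩ := hax B₂ hB₂ B₁ hB₁ x₁ (by rwa [symmDiff_comm])
        have huD : u ∈ B₁ ∆ B₂ := by rwa [symmDiff_comm] at huD'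
        by_cases huv : u = v
        · exact ⟨v, hvD, hvx, hv, by rw [← huv]; exact hu⟩
        · obtain ⟨t, htD', htv, ht⟩ := hax B₂ hB₂ B₁ hB₁ v (by rwa [symmDiff_comm])
          have htD : t ∈ B₁ ∆ B₂ := by rwa [symmDiff_comm] at htD'
          by_cases htx : t = x₁
          · subst htx
            exact ⟨v, hvD, hvx, hv, by rwa [pair_comm] at ht⟩
          · -- t = u and we derive a contradiction
            have hD3 : B₁ ∆ B₂ = ({x₁, v, u} : Finset (Fin n)) := by
              symm
              apply eq_of_subset_of_card_le
              · intro i hi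
                simp only [mem_insert, mem_singleton] at hi
                rcases hi with rfl | rfl | rfl <;> assumption
              · rw [h3, card_insert_of_notMem (by simp [Ne.symm hvx, Ne.symm hux]),
                  card_pair (fun h => huv h.symm)]
            have htu : t = u := by
              rw [hD3] at htD
              simp only [mem_insert, mem_singleton] at htD
              rcases htD with rfl | rfl | rfl
              · exact absurd rfl htx
              · exact absurd rfl htv
              · rfl
            rw [htu] at ht
            have hBY : B₁ ∆ (B₂ ∆ ({v, u} : Finset (Fin n))) = {x₁} := by
              rw [← symmDiff_assoc, sd_pair_eq_sdiff hvD huD, hD3,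
                triple_sdiff_pair hvx hux huv]
            obtain ⟨z, hz, hzx, -⟩ := hax B₁ hB₁ _ ht x₁ (by rw [hBY]; exact mem_singleton_self x₁)
            rw [hBY, mem_singleton] at hz
            exact absurd hz hzx
      · -- |Δ| = 4
        rcases two_V hax hB₁ hB₂ h4 hx₁ with done | ⟨v, r, hvD, hrD, hvx, hrx, hvr, hv1, hr1⟩
        · exact done
        rcases two_V hax hB₂ hB₁ (by rwa [symmDiff_comm]) (x₁ := x₁) (by rwa [symmDiff_comm]) with
          done | ⟨u, r', huD', hr'D', hux, hr'x, hur', hu1, hr'1⟩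
        · obtain ⟨x₂, hm, hne, hh1, hh2⟩ := done
          exact ⟨x₂, by rwa [symmDiff_comm] at hm, hne, hh2, hh1⟩
        have huD : u ∈ B₁ ∆ B₂ := by rwa [symmDiff_comm] at huD'
        have hr'D : r' ∈ B₁ ∆ B₂ := by rwa [symmDiff_comm] at hr'D'
        by_cases e1 : v = u
        · exact ⟨v, hvD, hvx, hv1, by rw [e1]; exact hu1⟩
        by_cases e2 : v = r'
        · exact ⟨v, hvD, hvx, hv1, by rw [e2]; exact hr'1⟩
        by_cases e3 : r = u
        · exact ⟨r, hrD, hrx, hr1, by rw [e3]; exact hu1⟩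
        by_cases e4 : r = r'
        · exact ⟨r, hrD, hrx, hr1, by rw [e4]; exact hr'1⟩
        · exfalso
          have hsub : ({v, r, u, r'} : Finset (Fin n)) ⊆ (B₁ ∆ B₂).erase x₁ := by
            intro i hi
            simp only [mem_insert, mem_singleton] at hi
            rw [mem_erase]
            rcases hi with rfl | rfl | rfl | rfl
            · exact ⟨hvx, hvD⟩
            · exact ⟨hrx, hrD⟩
            · exact ⟨hux, huD⟩
            · exact ⟨hr'x, hr'D⟩
          have hle := card_le_card hsub
          rw [card_four hvr e1 e2 e3 e4 hur', card_erase_of_mem hx₁, h4] at hle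
          omega
    · -- |Δ| ≥ 5 : climb–descend, two rounds
      have IH' : ∀ C₁ ∈ 𝓑, ∀ C₂ ∈ 𝓑, (C₁ ∆ C₂).card < (B₁ ∆ B₂).card → ∀ x ∈ C₁ ∆ C₂,
          ∃ y ∈ C₁ ∆ C₂, y ≠ x ∧ C₁ ∆ ({x, y} : Finset (Fin n)) ∈ 𝓑 ∧
            C₂ ∆ ({x, y} : Finset (Fin n)) ∈ 𝓑 := by
        intro C₁ h1 C₂ h2 hlt
        exact IH C₁ h1 C₂ h2 (by omega)
      obtain ⟨v, hvD, hvx, hv⟩ := hax B₁ hB₁ B₂ hB₂ x₁ hx₁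
      obtain ⟨t, htD', htv, ht⟩ := hax B₂ hB₂ B₁ hB₁ v (by rwa [symmDiff_comm])
      have htD : t ∈ B₁ ∆ B₂ := by rwa [symmDiff_comm] at htD'
      by_cases htx : t = x₁
      · subst htx
        exact ⟨v, hvD, hvx, hv, by rwa [pair_comm] at ht⟩
      · rcases climb_descend hax hB₁ hB₂ IH' hge hx₁ hvD htD hvx htx (Ne.symm htv) hv ht with
          done | ⟨-, s, hsD, hsx, hsv, -, hs1, hs2⟩
        · exact done
        rcases climb_descend hax hB₁ hB₂ IH' hge hx₁ hvD hsD hvx hsx (Ne.symm hsv) hv hs2 with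
          done | ⟨hsB, -⟩
        · exact done
        · exact ⟨s, hsD, hsx, hs1, hsB⟩

end StrongExchangeAux

theorem orthogonal_matroid_strong_symmetric_exchange {n : ℕ} (𝓑 : Set (Finset (Fin n)))
    (h𝓑 : IsOrthogonalMatroid 𝓑) :
    ∀ B₁ ∈ 𝓑, ∀ B₂ ∈ 𝓑, ∀ x₁ ∈ B₁ ∆ B₂,
      ∃ x₂ ∈ B₁ ∆ B₂, x₂ ≠ x₁ ∧ B₁ ∆ ({x₁, x₂} : Finset (Fin n)) ∈ 𝓑 ∧
        B₂ ∆ ({x₁, x₂} : Finset (Fin n)) ∈ 𝓑 := by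
  obtain ⟨-, hax⟩ := h𝓑
  intro B₁ hB₁ B₂ hB₂ x₁ hx₁
  exact StrongExchangeAux.key hax (B₁ ∆ B₂).card B₁ hB₁ B₂ hB₂ le_rfl x₁ hx₁
end

section
/- Let R be a commutative ring, let p : 2^{[n]} → R be a function on the subsets of [n] satisfying all Wick equations, and let T ⊆ [n]. Then the function q defined by q(J) = p(J Δ T) also satisfies all Wick equations. -/
open Finset
open scoped symmDiff

/-- The Wick equation for `p` indexed by the pair `J₁, J₂`: writing
`J₁ ∆ J₂ = {i₁ < i₂ < ⋯ < i_k}`, it reads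
`Σ_{j=1}^{k} (−1)^j · p(J₁ ∆ {i_j}) · p(J₂ ∆ {i_j}) = 0`.
(The exponent `((J₁ ∆ J₂).filter (· ≤ i)).card` is the position `j` of `i` in `J₁ ∆ J₂`.) -/
def WickEq {R : Type*} [CommRing R] {n : ℕ} (p : Finset (Fin n) → R)
    (J₁ J₂ : Finset (Fin n)) : Prop :=
  ∑ i ∈ J₁ ∆ J₂,
      (-1 : R) ^ ((J₁ ∆ J₂).filter (fun a => a ≤ i)).card *
        p (J₁ ∆ {i}) * p (J₂ ∆ {i}) = 0

/-- `p` satisfies all Wick equations. -/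
def SatisfiesWick {R : Type*} [CommRing R] {n : ℕ} (p : Finset (Fin n) → R) : Prop :=
  ∀ J₁ J₂ : Finset (Fin n), WickEq p J₁ J₂

/-- `p` satisfies all 4-term Wick equations. -/
def SatisfiesWick4 {R : Type*} [CommRing R] {n : ℕ} (p : Finset (Fin n) → R) : Prop :=
  ∀ J₁ J₂ : Finset (Fin n), (J₁ ∆ J₂).card = 4 → WickEq p J₁ J₂

theorem twist_satisfies_wick {R : Type*} [CommRing R] {n : ℕ}
    (p : Finset (Fin n) → R) (hp : SatisfiesWick p) (T : Finset (Fin n)) :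
    SatisfiesWick (fun J => p (J ∆ T)) := by
  intro J₁ J₂
  have h := hp (J₁ ∆ T) (J₂ ∆ T)
  unfold WickEq at h ⊢
  have key : (J₁ ∆ T) ∆ (J₂ ∆ T) = J₁ ∆ J₂ := by
    rw [symmDiff_symmDiff_symmDiff_comm, symmDiff_self, symmDiff_bot]
  rw [key] at h
  simpa [symmDiff_right_comm] using h
end

section
/- Let P = (G, R) be a partial field and let p : 2^{[n]} → G ∪ {0} be a function on the subsets of [n], not identically zero, satisfying all Wick equations (as equations in R). Then the support Supp(p) = {J ⊆ [n] : p(J) ≠ 0} is an orthogonal matroid on [n]. -/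
open Finset
open scoped symmDiff

theorem support_of_wick_vector_is_orthogonal_matroid {R : Type*} [CommRing R]
    (G : Subgroup Rˣ) (hG : (-1 : Rˣ) ∈ G) {n : ℕ}
    (p : Finset (Fin n) → R)
    (hval : ∀ J : Finset (Fin n), PFElem G (p J))
    (hne : ∃ J : Finset (Fin n), p J ≠ 0)
    (hp : SatisfiesWick p) :
    IsOrthogonalMatroid {J : Finset (Fin n) | p J ≠ 0} := by
  classical
  obtain ⟨J0, hJ0⟩ := hne
  haveI : Nontrivial R := nontrivial_of_ne _ _ hJ0
  refine ⟨⟨J0, hJ0⟩, ?_⟩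
  intro B₁ hB₁ B₂ hB₂ x₁ hx₁
  by_contra hcon
  push_neg at hcon
  simp only [Set.mem_setOf_eq, not_not] at hcon
  have key := hp (B₁ ∆ {x₁}) (B₂ ∆ {x₁})
  unfold WickEq at key
  have hD : (B₁ ∆ {x₁}) ∆ (B₂ ∆ {x₁}) = B₁ ∆ B₂ := by
    rw [symmDiff_symmDiff_symmDiff_comm, symmDiff_self, symmDiff_bot]
  rw [hD] at key
  rw [Finset.sum_eq_single_of_mem x₁ hx₁ ?h] at key
  · have hx : B₁ ∆ {x₁} ∆ {x₁} = B₁ := by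
      rw [symmDiff_assoc, symmDiff_self, symmDiff_bot]
    have hx' : B₂ ∆ {x₁} ∆ {x₁} = B₂ := by
      rw [symmDiff_assoc, symmDiff_self, symmDiff_bot]
    rw [hx, hx'] at key
    obtain h1 | ⟨u, _, hu⟩ := hval B₁
    · exact hB₁ h1
    obtain h2 | ⟨v, _, hv⟩ := hval B₂
    · exact hB₂ h2
    have hunit : IsUnit ((-1 : R) ^ ((B₁ ∆ B₂).filter (fun a => a ≤ x₁)).card
        * p B₁ * p B₂) := by
      rw [← hu, ← hv]
      exact ((IsUnit.pow _ (isUnit_one.neg)).mul u.isUnit).mul v.isUnit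
    rw [key] at hunit
    exact not_isUnit_zero (M₀ := R) hunit
  · intro i hi hix
    have hzero : p (B₁ ∆ {x₁} ∆ {i}) = 0 := by
      have : B₁ ∆ {x₁} ∆ {i} = B₁ ∆ ({x₁, i} : Finset (Fin n)) := by
        rw [symmDiff_assoc]
        congr 1
        ext a
        simp only [Finset.mem_symmDiff, Finset.mem_singleton, Finset.mem_insert]
        constructor
        · rintro (⟨rfl, -⟩ | ⟨rfl, -⟩) <;> tauto
        · rintro (rfl | rfl)
          · exact Or.inl ⟨rfl, fun h => hix h.symm⟩
          · exact Or.inr ⟨rfl, fun h => hix h⟩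
      rw [this]
      exact hcon i hi hix
    rw [hzero, mul_zero, zero_mul]
end

section
/- Let c, d, N, m be positive integers and let f₁, …, f_N ∈ ℤ[x₁, …, x_m] be polynomials with deg(f_i) ≤ d and ‖f_i‖ ≤ c for all i, where ‖f‖ denotes the maximal absolute value of the coefficients of f. Let r be a positive integer satisfying r > C(Nd + m, m) · (log(3r) + N·log(c·(eN)^d)), where C(·,·) is the binomial coefficient, log is the logarithm to base 2, and e is Euler's number. Then the number of realizable sets of {f₁, …, f_N} is at most r. -/
open Finset MvPolynomial

/-- `S ⊆ [N]` is realizable with respect to `f₁, …, f_N ∈ ℤ[x₁, …, x_m]` if there are a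
field `k` and a vector `u ∈ k^m` such that `S = {i ∈ [N] : ψ_k(f_i)(u) ≠ 0}`. -/
def RealizableSet {N m : ℕ} (f : Fin N → MvPolynomial (Fin m) ℤ) (S : Finset (Fin N)) : Prop :=
  ∃ (k : Type) (fld : Field k),
    letI := fld
    ∃ u : Fin m → k,
      ∀ i : Fin N, i ∈ S ↔ MvPolynomial.eval u (MvPolynomial.map (Int.castRingHom k) (f i)) ≠ 0


set_option linter.unusedSectionVars false
set_option maxHeartbeats 1000000


private lemma degF_add {m : ℕ} (a b : Fin m →₀ ℕ) :
    ((a + b).sum fun _ e => e) = (a.sum fun _ e => e) + (b.sum fun _ e => e) :=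
  Finsupp.sum_add_index' (fun _ => rfl) (fun _ _ _ => rfl)

private lemma fiber_card_le {m : ℕ} (μ : Fin m →₀ ℕ) (k : ℕ) :
    ((Finset.HasAntidiagonal.antidiagonal μ).filter fun x => (x.2.sum fun _ e => e) = k).card
      ≤ (μ.sum fun _ e => e).choose k := by
  classical
  have h1 : ((Finset.HasAntidiagonal.antidiagonal μ).filter fun x => (x.2.sum fun _ e => e) = k).card
      ≤ (Multiset.powersetCard k (Finsupp.toMultiset μ)).toFinset.card := by
    apply Finset.card_le_card_of_injOn (fun x => Finsupp.toMultiset x.2)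
    · intro x hx
      simp only [Finset.mem_coe, mem_filter, Finset.HasAntidiagonal.mem_antidiagonal] at hx
      rw [Finset.mem_coe, Multiset.mem_toFinset, Multiset.mem_powersetCard]
      constructor
      · rw [Multiset.le_iff_count]
        intro a
        rw [Finsupp.count_toMultiset, Finsupp.count_toMultiset]
        have := DFunLike.congr_fun hx.1 a
        simp only [Finsupp.coe_add, Pi.add_apply] at this
        omega
      · rw [Finsupp.card_toMultiset]; exact hx.2
    · intro x hx y hy hxy
      simp only [coe_filter, Set.mem_setOf_eq, Finset.HasAntidiagonal.mem_antidiagonal] at hx hy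
      have h2 : x.2 = y.2 := by
        apply Finsupp.ext
        intro a
        have := congrArg (Multiset.count a) hxy
        rwa [Finsupp.count_toMultiset, Finsupp.count_toMultiset] at this
      have h1' : x.1 = y.1 := by
        have := hx.1.trans hy.1.symm
        rw [h2] at this
        exact add_right_cancel this
      exact Prod.ext h1' h2
  refine h1.trans ?_
  refine (Multiset.toFinset_card_le _).trans ?_
  rw [Multiset.card_powersetCard, Finsupp.card_toMultiset]
  rfl

private lemma antidiag_pow_sum_le {m : ℕ} (μ : Fin m →₀ ℕ) (s : ℤ) (hs : 0 ≤ s) :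
    ∑ x ∈ Finset.HasAntidiagonal.antidiagonal μ, s ^ (x.2.sum fun _ e => e)
      ≤ (s + 1) ^ (μ.sum fun _ e => e) := by
  classical
  set D := μ.sum fun _ e => e with hD
  have hmaps : ∀ x ∈ Finset.HasAntidiagonal.antidiagonal μ, (x.2.sum fun _ e => e) ∈ Finset.range (D + 1) := by
    intro x hx
    rw [Finset.HasAntidiagonal.mem_antidiagonal] at hx
    rw [Finset.mem_range]
    have : (x.1.sum fun _ e => e) + (x.2.sum fun _ e => e) = D := by
      rw [hD, ← hx, degF_add]
    omega
  rw [← Finset.sum_fiberwise_of_maps_to hmaps]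
  have key : ∀ k ∈ Finset.range (D + 1),
      (∑ x ∈ (Finset.HasAntidiagonal.antidiagonal μ).filter (fun x => (x.2.sum fun _ e => e) = k),
        s ^ (x.2.sum fun _ e => e)) ≤ (D.choose k : ℤ) * s ^ k := by
    intro k _
    have : (∑ x ∈ (Finset.HasAntidiagonal.antidiagonal μ).filter (fun x => (x.2.sum fun _ e => e) = k),
        s ^ (x.2.sum fun _ e => e)) =
        ((Finset.HasAntidiagonal.antidiagonal μ).filter (fun x => (x.2.sum fun _ e => e) = k)).card • s ^ k := by
      rw [← Finset.sum_const]
      apply Finset.sum_congr rfl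
      intro x hx
      rw [(Finset.mem_filter.mp hx).2]
    rw [this, nsmul_eq_mul]
    apply mul_le_mul_of_nonneg_right _ (by positivity)
    exact_mod_cast fiber_card_le μ k
  calc _ ≤ ∑ k ∈ Finset.range (D + 1), (D.choose k : ℤ) * s ^ k := Finset.sum_le_sum key
    _ = (s + 1) ^ D := by
        rw [add_pow]
        apply Finset.sum_congr rfl
        intro k _
        rw [one_pow, mul_one, mul_comm]

private lemma coeff_prod_bound {N m : ℕ} (f : Fin N → MvPolynomial (Fin m) ℤ) (c : ℤ)
    (hc : ∀ i μ, |(f i).coeff μ| ≤ c) (S : Finset (Fin N)) :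
    ∀ μ : Fin m →₀ ℕ,
      |(∏ i ∈ S, f i).coeff μ| ≤ c ^ S.card * (S.card : ℤ) ^ (μ.sum fun _ e => e) := by
  classical
  induction S using Finset.induction_on with
  | empty =>
    intro μ
    rw [Finset.prod_empty]
    by_cases h : μ = 0
    · subst h
      simp [MvPolynomial.coeff_one]
    · have h1 : (MvPolynomial.coeff μ (1 : MvPolynomial (Fin m) ℤ)) = 0 := by
        rw [MvPolynomial.coeff_one, if_neg (fun hh => h hh.symm)]
      rw [h1, abs_zero, Finset.card_empty, pow_zero, one_mul, Nat.cast_zero]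
      exact pow_nonneg le_rfl _
  | @insert a S' hnot ih =>
    intro μ
    rw [Finset.prod_insert hnot, MvPolynomial.coeff_mul]
    have hcnn : 0 ≤ c := le_trans (abs_nonneg _) (hc a 0)
    calc |∑ x ∈ Finset.HasAntidiagonal.antidiagonal μ, (f a).coeff x.1 * (∏ i ∈ S', f i).coeff x.2|
        ≤ ∑ x ∈ Finset.HasAntidiagonal.antidiagonal μ, |(f a).coeff x.1 * (∏ i ∈ S', f i).coeff x.2| :=
          Finset.abs_sum_le_sum_abs _ _
      _ ≤ ∑ x ∈ Finset.HasAntidiagonal.antidiagonal μ, c * (c ^ S'.card * (S'.card : ℤ) ^ (x.2.sum fun _ e => e)) := by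
          apply Finset.sum_le_sum
          intro x _
          rw [abs_mul]
          exact mul_le_mul (hc a x.1) (ih x.2) (abs_nonneg _) hcnn
      _ = c ^ (insert a S').card * ∑ x ∈ Finset.HasAntidiagonal.antidiagonal μ, (S'.card : ℤ) ^ (x.2.sum fun _ e => e) := by
          rw [Finset.card_insert_of_notMem hnot, pow_succ, ← Finset.mul_sum, ← Finset.mul_sum,
            mul_assoc]
          ring
      _ ≤ c ^ (insert a S').card * ((S'.card : ℤ) + 1) ^ (μ.sum fun _ e => e) := by
          apply mul_le_mul_of_nonneg_left (antidiag_pow_sum_le μ _ (by positivity)) (by positivity)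
      _ = _ := by
          rw [Finset.card_insert_of_notMem hnot]
          push_cast
          ring

private lemma card_le_choose {m D : ℕ} (T : Finset (Fin m →₀ ℕ))
    (hT : ∀ μ ∈ T, (μ.sum fun _ e => e) ≤ D) : T.card ≤ (D + m).choose m := by
  classical
  let F : (Fin m →₀ ℕ) → Sym (Fin (m + 1)) D := fun μ =>
    if h : (μ.sum fun _ e => e) ≤ D then
      ⟨(Finsupp.toMultiset μ).map Fin.castSucc +
          Multiset.replicate (D - (μ.sum fun _ e => e)) (Fin.last m), by
        simp only [Multiset.card_add, Multiset.card_map, Finsupp.card_toMultiset,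
          Multiset.card_replicate]
        have : (μ.sum fun _ => id) = (μ.sum fun _ e => e) := rfl
        omega⟩
    else ⟨Multiset.replicate D (Fin.last m), by simp⟩
  have h1 : T.card ≤ Fintype.card (Sym (Fin (m + 1)) D) := by
    rw [← Finset.card_univ]
    apply Finset.card_le_card_of_injOn F (fun _ _ => Finset.mem_univ _)
    intro μ hμ ν hν h
    simp only [F, dif_pos (hT μ hμ), dif_pos (hT ν hν)] at h
    have h2 := congrArg Sym.toMultiset h
    simp only [Sym.toMultiset] at h2
    apply Finsupp.ext
    intro i
    have h3 := congrArg (Multiset.count (Fin.castSucc i)) h2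
    have hne : Fin.last m ≠ (Fin.castSucc i : Fin (m + 1)) := (Fin.castSucc_lt_last i).ne'
    have hF : ∀ μ' ∈ T, ((F μ' : Sym (Fin (m + 1)) D) : Multiset (Fin (m + 1))) = Multiset.map Fin.castSucc (Finsupp.toMultiset μ') + Multiset.replicate (D - (μ'.sum fun _ e => e)) (Fin.last m) := by
      intro μ' hμ'
      exact congrArg Subtype.val (dif_pos (hT μ' hμ'))
    replace h3 : Multiset.count (Fin.castSucc i) (Multiset.map Fin.castSucc (Finsupp.toMultiset μ) + Multiset.replicate (D - (μ.sum fun _ e => e)) (Fin.last m)) = Multiset.count (Fin.castSucc i) (Multiset.map Fin.castSucc (Finsupp.toMultiset ν) + Multiset.replicate (D - (ν.sum fun _ e => e)) (Fin.last m)) := by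
      rw [← hF μ hμ, ← hF ν hν]
      exact h3
    simp only [Multiset.count_add, Multiset.count_replicate, if_neg hne,
      Multiset.count_map_eq_count' _ _ (Fin.castSucc_injective m),
      Finsupp.count_toMultiset, add_zero] at h3
    exact h3
  refine h1.trans ?_
  rw [Sym.card_sym_eq_choose, Fintype.card_fin]
  have e1 : m + 1 + D - 1 = D + m := by omega
  rw [e1]
  have e2 : (D + m).choose (D + m - m) = (D + m).choose m := Nat.choose_symm (by omega)
  have e3 : D + m - m = D := by omega
  rw [e3] at e2
  exact e2.le


section NZPLattice
open Matrix Module Submodule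

namespace NZP

variable {ι : Type} [Fintype ι] [DecidableEq ι]

noncomputable def gram {κ : Type} [Fintype κ] (x : κ → ι → ℤ) : Matrix κ κ ℤ :=
  Matrix.of fun a b => x a ⬝ᵥ x b

lemma gram_map_real {κ : Type} [Fintype κ] (x : κ → ι → ℤ) :
    (gram x).map (Int.cast : ℤ → ℝ) =
      (Matrix.of fun a i => ((x a i : ℝ))) * (Matrix.of fun a i => ((x a i : ℝ)))ᴴ := by
  ext a b
  simp [gram, Matrix.mul_apply, Matrix.conjTranspose_apply, dotProduct]

lemma gram_psd_real {κ : Type} [Fintype κ] (x : κ → ι → ℤ) :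
    ((gram x).map (Int.cast : ℤ → ℝ)).PosSemidef := by
  rw [gram_map_real]
  exact Matrix.posSemidef_self_mul_conjTranspose _

lemma gram_det_nonneg {κ : Type} [Fintype κ] [DecidableEq κ] (x : κ → ι → ℤ) :
    0 ≤ (gram x).det := by
  have h1 := gram_psd_real x
  have h2 : (0:ℝ) ≤ ((gram x).map (Int.cast : ℤ → ℝ)).det := by
    rw [h1.isHermitian.det_eq_prod_eigenvalues]
    apply Finset.prod_nonneg
    intro i _
    exact_mod_cast h1.eigenvalues_nonneg i
  have h3 : ((gram x).map (Int.cast : ℤ → ℝ)) = (Int.castRingHom ℝ).mapMatrix (gram x) := rfl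
  rw [h3, ← RingHom.map_det, eq_intCast] at h2
  exact_mod_cast h2

lemma li_rat {κ : Type} [Fintype κ] (x : κ → ι → ℤ) (h : LinearIndependent ℤ x) :
    LinearIndependent ℚ (fun a => (fun i => (x a i : ℚ))) := by
  rw [Fintype.linearIndependent_iff] at h ⊢
  intro g hg
  obtain ⟨b, hb⟩ := IsLocalization.exist_integer_multiples (nonZeroDivisors ℤ)
    Finset.univ g
  have hz : ∀ i : κ, ∃ z : ℤ, (z : ℚ) = (b : ℤ) • g i := by
    intro i
    obtain ⟨z, hz⟩ := hb i (Finset.mem_univ i)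
    exact ⟨z, by exact_mod_cast hz⟩
  choose z hz using hz
  have hb0 : (b : ℤ) ≠ 0 := nonZeroDivisors.coe_ne_zero b
  have hzero : ∀ i, z i = 0 := by
    apply h
    funext j
    have hq : ((∑ i, z i • x i) j : ℚ) = 0 := by
      simp only [Finset.sum_apply, Pi.smul_apply, smul_eq_mul, Int.cast_sum, Int.cast_mul]
      have e1 : ∀ i : κ, (z i : ℚ) * (x i j : ℚ) = ((b : ℤ) : ℚ) * (g i * (x i j : ℚ)) := by
        intro i
        rw [hz i, zsmul_eq_mul]
        ring
      rw [Finset.sum_congr rfl fun i _ => e1 i, ← Finset.mul_sum]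
      have := congrFun hg j
      simp only [Finset.sum_apply, Pi.smul_apply, smul_eq_mul, Pi.zero_apply] at this
      rw [this, mul_zero]
    have : ((∑ i, z i • x i) j : ℤ) = ((0:ℤ) : ℚ) → (∑ i, z i • x i) j = 0 := by
      intro hh
      exact_mod_cast hh
    simp only [Pi.zero_apply]
    exact this (by exact_mod_cast hq)
  intro i
  have h1 : (z i : ℚ) = 0 := by rw [hzero i]; norm_num
  rw [hz i, zsmul_eq_mul] at h1
  rcases mul_eq_zero.mp h1 with h2 | h2
  · exact absurd (by exact_mod_cast h2) hb0
  · exact h2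

lemma gram_det_ne_zero {κ : Type} [Fintype κ] [DecidableEq κ] (x : κ → ι → ℤ)
    (h : LinearIndependent ℤ x) : (gram x).det ≠ 0 := by
  intro h0
  have hq : ((gram x).map (Int.cast : ℤ → ℚ)).det = 0 := by
    have h3 : ((gram x).map (Int.cast : ℤ → ℚ)) = (Int.castRingHom ℚ).mapMatrix (gram x) := rfl
    rw [h3, ← RingHom.map_det, h0]
    norm_num
  obtain ⟨y, hy0, hmv⟩ := Matrix.exists_mulVec_eq_zero_iff.mpr hq
  set w : ι → ℚ := fun j => ∑ a, y a * (x a j : ℚ) with hw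
  have hww : ∑ j, w j * w j = 0 := by
    have e1 : ∑ j, w j * w j = ∑ a, y a * (((gram x).map (Int.cast : ℤ → ℚ)).mulVec y a) := by
      simp only [hw, Matrix.mulVec, dotProduct, Matrix.map_apply, gram, Matrix.of_apply,
        Finset.sum_mul, Finset.mul_sum]
      rw [Finset.sum_comm]
      apply Finset.sum_congr rfl
      intro a _
      rw [Finset.sum_comm]
      apply Finset.sum_congr rfl
      intro b _
      push_cast
      rw [Finset.sum_mul, Finset.mul_sum]
      exact Finset.sum_congr rfl fun j _ => by ring
    rw [e1, hmv]
    simp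
  have hwz : ∀ j, w j = 0 := by
    intro j
    have h1 : ∀ j' ∈ Finset.univ (α := ι), (0:ℚ) ≤ w j' * w j' := fun j' _ => mul_self_nonneg _
    have := (Finset.sum_eq_zero_iff_of_nonneg h1).mp hww j (Finset.mem_univ j)
    exact mul_self_eq_zero.mp this
  have hli := li_rat x h
  rw [Fintype.linearIndependent_iff] at hli
  apply hy0
  funext a
  apply hli y
  · funext j
    simp only [Finset.sum_apply, Pi.smul_apply, smul_eq_mul, Pi.zero_apply]
    exact hwz j

noncomputable def covolSq (Λ : Submodule ℤ (ι → ℤ)) : ℤ :=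
  letI := Classical.decEq (Module.Free.ChooseBasisIndex ℤ ↥Λ)
  (gram fun a : Module.Free.ChooseBasisIndex ℤ ↥Λ =>
    ((Module.Free.chooseBasis ℤ ↥Λ) a : ι → ℤ)).det

lemma gram_eq_mul {κ : Type} [Fintype κ] (x : κ → ι → ℤ) :
    gram x = (Matrix.of x) * (Matrix.of x)ᵀ := by
  ext a b
  simp [gram, Matrix.mul_apply, dotProduct]

lemma gram_comb {κ κ' : Type} [Fintype κ] [Fintype κ'] (x : κ → ι → ℤ) (P : Matrix κ κ' ℤ) :
    gram (fun j => ∑ i, P i j • x i) = Pᵀ * gram x * P := by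
  have e1 : Matrix.of (fun j => ∑ i, P i j • x i) = Pᵀ * Matrix.of x := by
    ext a j
    simp [Matrix.mul_apply, Matrix.transpose_apply]
  rw [gram_eq_mul, gram_eq_mul, e1, Matrix.transpose_mul, Matrix.transpose_transpose]
  simp only [Matrix.mul_assoc]

lemma coe_basis_li {κ : Type} {Λ : Submodule ℤ (ι → ℤ)} (b : Basis κ ℤ ↥Λ) :
    LinearIndependent ℤ (fun a => (b a : ι → ℤ)) := by
  have := b.linearIndependent.map' Λ.subtype (Submodule.ker_subtype Λ)
  exact this

lemma span_coe_basis {κ : Type} {Λ : Submodule ℤ (ι → ℤ)} (b : Basis κ ℤ ↥Λ) :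
    Submodule.span ℤ (Set.range fun a => (b a : ι → ℤ)) = Λ := by
  have h1 : (Set.range fun a => (b a : ι → ℤ)) = Λ.subtype '' Set.range ⇑b :=
    Set.range_comp _ _
  rw [h1, ← Submodule.map_span, b.span_eq, Submodule.map_top, Submodule.range_subtype]

lemma gram_det_basis_eq {κ : Type} [Fintype κ] [DecidableEq κ] {Λ : Submodule ℤ (ι → ℤ)}
    (c c' : Basis κ ℤ ↥Λ) :
    (gram fun a => (c' a : ι → ℤ)).det = (gram fun a => (c a : ι → ℤ)).det := by
    set P := c.toMatrix ⇑c' with hP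
    have e1 : (fun j => ((c' j : ι → ℤ))) = fun j => ∑ i, P i j • ((c i : ι → ℤ)) := by
      funext j
      have := c.sum_toMatrix_smul_self ⇑c' j
      calc ((c' j : ι → ℤ)) = ((∑ i, P i j • c i : ↥Λ) : ι → ℤ) := by rw [this]
        _ = ∑ i, P i j • ((c i : ι → ℤ)) := by
            push_cast
            rfl
    rw [e1, gram_comb, Matrix.det_mul, Matrix.det_mul, Matrix.det_transpose]
    have hu : P.det * (c'.toMatrix ⇑c).det = 1 := by
      rw [← Matrix.det_mul, Basis.toMatrix_mul_toMatrix_flip, Matrix.det_one]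
    have : P.det = 1 ∨ P.det = -1 := Int.isUnit_iff.mp (IsUnit.of_mul_eq_one _ hu)
    rcases this with h | h <;> rw [h] <;> ring

lemma covolSq_eq {κ : Type} [Fintype κ] [DecidableEq κ] (Λ : Submodule ℤ (ι → ℤ))
    (b : Basis κ ℤ ↥Λ) :
    covolSq Λ = (gram fun a => (b a : ι → ℤ)).det := by
  letI := Classical.decEq (Module.Free.ChooseBasisIndex ℤ ↥Λ)
  set cb := Module.Free.chooseBasis ℤ ↥Λ with hcb
  have e : κ ≃ Module.Free.ChooseBasisIndex ℤ ↥Λ := b.indexEquiv cb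
  have h2 : (gram fun a => (b a : ι → ℤ)).det
      = (gram fun a => ((b.reindex e) a : ι → ℤ)).det := by
    have e2 : (fun a => ((b.reindex e) a : ι → ℤ))
        = fun a => ((fun a' => (b a' : ι → ℤ)) (e.symm a)) := by
      funext a
      rw [Basis.reindex_apply]
    rw [e2]
    have : gram (fun a => ((fun a' => (b a' : ι → ℤ)) (e.symm a)))
        = (gram fun a' => (b a' : ι → ℤ)).submatrix ⇑e.symm ⇑e.symm := by
      ext a c
      simp [gram, Matrix.submatrix_apply]
    rw [this, Matrix.det_submatrix_equiv_self]
  rw [h2]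
  unfold covolSq
  exact gram_det_basis_eq (b.reindex e) cb

lemma covolSq_pos (Λ : Submodule ℤ (ι → ℤ)) : 1 ≤ covolSq Λ := by
  letI := Classical.decEq (Module.Free.ChooseBasisIndex ℤ ↥Λ)
  set cb := Module.Free.chooseBasis ℤ ↥Λ
  have h1 : covolSq Λ = (gram fun a => (cb a : ι → ℤ)).det := covolSq_eq Λ cb
  have h2 := gram_det_ne_zero _ (coe_basis_li cb)
  have h3 := gram_det_nonneg (fun a => (cb a : ι → ℤ))
  omega

lemma covolSq_bot : covolSq (⊥ : Submodule ℤ (ι → ℤ)) = 1 := by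
  classical
  have hsub : Subsingleton ↥(⊥ : Submodule ℤ (ι → ℤ)) := inferInstance
  have b : Basis (Fin 0) ℤ ↥(⊥ : Submodule ℤ (ι → ℤ)) := Basis.empty _
  rw [covolSq_eq _ b, Matrix.det_fin_zero]


lemma up_step (Λ' : Submodule ℤ (ι → ℤ)) (v : ι → ℤ)
    (hv : ∀ D : ℤ, D ≠ 0 → D • v ∉ Λ') :
    covolSq (Λ' ⊔ (ℤ ∙ v)) ≤ (v ⬝ᵥ v) * covolSq Λ' ∧
      Module.finrank ℤ ↥(Λ' ⊔ (ℤ ∙ v)) = Module.finrank ℤ ↥Λ' + 1 := by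
  classical
  have hv0 : v ≠ 0 := by
    intro h
    exact hv 1 one_ne_zero (by rw [h, smul_zero]; exact Λ'.zero_mem)
  set b := Module.Free.chooseBasis ℤ ↥Λ' with hb
  set κ := Module.Free.ChooseBasisIndex ℤ ↥Λ' with hκ
  set w : κ ⊕ Unit → ι → ℤ := Sum.elim (fun a => ((b a : ι → ℤ))) (fun _ => v) with hwdef
  have li_b : LinearIndependent ℤ (fun a : κ => (b a : ι → ℤ)) := coe_basis_li b
  have li_v : LinearIndependent ℤ (fun _ : Unit => v) := linearIndependent_unique_iff.mpr hv0
  have hrv : Set.range (fun _ : Unit => v) = {v} := Set.range_const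
  have disj : Disjoint (Submodule.span ℤ (Set.range fun a : κ => (b a : ι → ℤ)))
      (Submodule.span ℤ (Set.range fun _ : Unit => v)) := by
    rw [span_coe_basis b, hrv]
    rw [Submodule.disjoint_def]
    intro x hx hx2
    obtain ⟨aa, rfl⟩ := Submodule.mem_span_singleton.mp hx2
    by_cases h : aa = 0
    · rw [h, zero_smul]
    · exact absurd hx (hv aa h)
  have li_w : LinearIndependent ℤ w := li_b.sum_type li_v disj
  have hspan : Submodule.span ℤ (Set.range w) = Λ' ⊔ (ℤ ∙ v) := by
    rw [hwdef, Set.Sum.elim_range, Submodule.span_union, span_coe_basis b, hrv]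
  set c0 : Basis (κ ⊕ Unit) ℤ ↥(Submodule.span ℤ (Set.range w)) := Basis.span li_w with hc0
  set c : Basis (κ ⊕ Unit) ℤ ↥(Λ' ⊔ (ℤ ∙ v)) := c0.map (LinearEquiv.ofEq _ _ hspan) with hc
  have hcoe : ∀ a, (c a : ι → ℤ) = w a := by
    intro a
    rw [hc, Basis.map_apply]
    have h1 : ((LinearEquiv.ofEq _ _ hspan) (c0 a) : ι → ℤ) = ((c0 a : ↥(Submodule.span ℤ (Set.range w))) : ι → ℤ) := rfl
    rw [h1, hc0, Basis.span_apply]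
  constructor
  · -- determinant inequality
    have hdet1 : covolSq (Λ' ⊔ (ℤ ∙ v)) = (gram w).det := by
      rw [covolSq_eq _ c]
      have hfun : (fun a => (c a : ι → ℤ)) = w := funext hcoe
      rw [hfun]
    have hdet2 : covolSq Λ' = (gram fun a : κ => (b a : ι → ℤ)).det := covolSq_eq _ b
    rw [hdet1, hdet2]
    -- work over ℝ
    set A : Matrix κ κ ℝ := (gram fun a : κ => (b a : ι → ℤ)).map (Int.cast : ℤ → ℝ) with hA
    set Bm : Matrix κ Unit ℝ := Matrix.of (fun a _ => (((b a : ι → ℤ) ⬝ᵥ v : ℤ) : ℝ)) with hBm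
    set Cm : Matrix Unit κ ℝ := Matrix.of (fun _ a => (((b a : ι → ℤ) ⬝ᵥ v : ℤ) : ℝ)) with hCm
    set Dm : Matrix Unit Unit ℝ := Matrix.of (fun _ _ => ((v ⬝ᵥ v : ℤ) : ℝ)) with hDm
    have hblock : (gram w).map (Int.cast : ℤ → ℝ) = Matrix.fromBlocks A Bm Cm Dm := by
      ext a b'
      rcases a with a | a <;> rcases b' with b' | b'
      · simp only [Matrix.map_apply, Matrix.fromBlocks_apply₁₁, hA, gram, Matrix.of_apply,
          hwdef, Sum.elim_inl]
      · simp only [Matrix.map_apply, Matrix.fromBlocks_apply₁₂, hBm, gram, Matrix.of_apply,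
          hwdef, Sum.elim_inl, Sum.elim_inr]
      · simp only [Matrix.map_apply, Matrix.fromBlocks_apply₂₁, hCm, gram, Matrix.of_apply,
          hwdef, Sum.elim_inl, Sum.elim_inr]
        rw [dotProduct_comm]
      · simp only [Matrix.map_apply, Matrix.fromBlocks_apply₂₂, hDm, gram, Matrix.of_apply,
          hwdef, Sum.elim_inr]
    have hApsd : A.PosSemidef := gram_psd_real _
    have hdetA : A.det = ((gram fun a : κ => (b a : ι → ℤ)).det : ℝ) := by
      rw [hA]
      have h3 : ((gram fun a : κ => (b a : ι → ℤ)).map (Int.cast : ℤ → ℝ))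
          = (Int.castRingHom ℝ).mapMatrix (gram fun a : κ => (b a : ι → ℤ)) := rfl
      rw [h3, ← RingHom.map_det, eq_intCast]
    have hdetApos : (0:ℝ) < A.det := by
      rw [hdetA]
      have h4 := covolSq_pos Λ'
      rw [hdet2] at h4
      exact_mod_cast lt_of_lt_of_le zero_lt_one (by exact_mod_cast h4)
    haveI : Invertible A := A.invertibleOfIsUnitDet (isUnit_iff_ne_zero.mpr hdetApos.ne')
    have hschur : ((gram w).map (Int.cast : ℤ → ℝ)).det = A.det * (Dm - Cm * ⅟A * Bm).det := by
      rw [hblock, Matrix.det_fromBlocks₁₁]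
    have hinv : (⅟A : Matrix κ κ ℝ) = A⁻¹ := Matrix.invOf_eq_nonsing_inv A
    set y : κ → ℝ := fun a => (((b a : ι → ℤ) ⬝ᵥ v : ℤ) : ℝ) with hy
    have hsymm : ∀ p q : κ, A⁻¹ p q = A⁻¹ q p := by
      intro p q
      have hH := (hApsd.inv).isHermitian
      conv_lhs => rw [← hH]
      simp [Matrix.conjTranspose_apply]
    have hentry : (Cm * A⁻¹ * Bm) () () = y ⬝ᵥ (A⁻¹ *ᵥ y) := by
      simp only [Matrix.mul_apply, Matrix.mulVec, dotProduct, hCm, hBm, hy, Matrix.of_apply,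
        Finset.sum_mul, Finset.mul_sum]
      apply Finset.sum_congr rfl
      intro a _
      apply Finset.sum_congr rfl
      intro k _
      rw [hsymm k a]
      ring
    have hnn : 0 ≤ y ⬝ᵥ (A⁻¹ *ᵥ y) := by
      have h8 := (hApsd.inv).dotProduct_mulVec_nonneg y
      rwa [star_trivial] at h8
    have hDentry : (Dm - Cm * ⅟A * Bm).det = ((v ⬝ᵥ v : ℤ) : ℝ) - (Cm * A⁻¹ * Bm) () () := by
      rw [Matrix.det_unique, hinv]
      simp [hDm, Matrix.sub_apply]
    have hkey : ((gram w).map (Int.cast : ℤ → ℝ)).det ≤ ((v ⬝ᵥ v : ℤ) : ℝ) * A.det := by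
      rw [hschur, hDentry, hentry]
      have h5 : ((v ⬝ᵥ v : ℤ) : ℝ) - y ⬝ᵥ (A⁻¹ *ᵥ y) ≤ ((v ⬝ᵥ v : ℤ) : ℝ) := by linarith
      calc A.det * (((v ⬝ᵥ v : ℤ) : ℝ) - y ⬝ᵥ (A⁻¹ *ᵥ y)) ≤ A.det * ((v ⬝ᵥ v : ℤ) : ℝ) :=
            mul_le_mul_of_nonneg_left h5 hdetApos.le
        _ = ((v ⬝ᵥ v : ℤ) : ℝ) * A.det := mul_comm _ _
    have h6 : (((gram w).det : ℤ) : ℝ) ≤ (((v ⬝ᵥ v) * (gram fun a : κ => (b a : ι → ℤ)).det : ℤ) : ℝ) := by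
      have h7 : ((gram w).map (Int.cast : ℤ → ℝ)).det = (((gram w).det : ℤ) : ℝ) := by
        have h3 : ((gram w).map (Int.cast : ℤ → ℝ)) = (Int.castRingHom ℝ).mapMatrix (gram w) := rfl
        rw [h3, ← RingHom.map_det, eq_intCast]
      rw [← h7]
      rw [Int.cast_mul, ← hdetA]
      exact hkey
    exact_mod_cast h6
  · rw [Module.finrank_eq_card_basis c, Module.finrank_eq_card_basis b, Fintype.card_sum,
      Fintype.card_unit]

lemma tors_step (Λ Λ' : Submodule ℤ (ι → ℤ)) (hle : Λ' ≤ Λ) (hne : Λ' ≠ Λ)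
    (D : ℤ) (hD : D ≠ 0) (hmul : ∀ x ∈ Λ, D • x ∈ Λ') :
    4 * covolSq Λ ≤ covolSq Λ' ∧ Module.finrank ℤ ↥Λ' = Module.finrank ℤ ↥Λ := by
  classical
  obtain ⟨n, o, hno, bO, bN, a, ha⟩ :=
    Submodule.exists_smith_normal_form_of_le (Pi.basisFun ℤ ι) Λ' Λ hle
  -- the multiplication-by-D map
  set φ : (ι → ℤ) →ₗ[ℤ] (ι → ℤ) := D • (LinearMap.id) with hφ
  have hφapp : ∀ x, φ x = D • x := fun x => rfl
  have hφinj : Function.Injective φ := by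
    intro x y hxy
    rw [hφapp, hφapp] at hxy
    exact smul_right_injective _ hD hxy
  set Λ'' : Submodule ℤ (ι → ℤ) := Λ.map φ with hΛ''
  have hΛ''le : Λ'' ≤ Λ' := by
    rintro x ⟨y, hy, rfl⟩
    exact hmul y hy
  obtain ⟨n₂, o₂, hno₂, bO₂, bN₂, a₂, ha₂⟩ :=
    Submodule.exists_smith_normal_form_of_le (Pi.basisFun ℤ ι) Λ'' Λ' hΛ''le
  have bO'' : Basis (Fin o) ℤ ↥Λ'' := bO.map (Submodule.equivMapOfInjective φ hφinj Λ)
  have e1 : Module.finrank ℤ ↥Λ'' = o := by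
    rw [Module.finrank_eq_card_basis bO'', Fintype.card_fin]
  have e2 : Module.finrank ℤ ↥Λ'' = n₂ := by
    rw [Module.finrank_eq_card_basis bN₂, Fintype.card_fin]
  have e3 : Module.finrank ℤ ↥Λ' = o₂ := by
    rw [Module.finrank_eq_card_basis bO₂, Fintype.card_fin]
  have e4 : Module.finrank ℤ ↥Λ' = n := by
    rw [Module.finrank_eq_card_basis bN, Fintype.card_fin]
  have hon : o ≤ n := by omega
  obtain rfl : n = o := le_antisymm hno hon
  have hcast : ∀ i : Fin n, Fin.castLE hno i = i := fun i => Fin.ext rfl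
  have ha' : ∀ i : Fin n, ((bN i : ι → ℤ)) = a i • ((bO i : ι → ℤ)) := by
    intro i
    rw [ha i, hcast i]
  have ha0 : ∀ i, a i ≠ 0 := by
    intro i h0
    apply bN.ne_zero i
    have : (bN i : ι → ℤ) = 0 := by rw [ha' i, h0, zero_smul]
    exact Subtype.ext this
  -- gram relation
  have hgram : gram (fun i => (bN i : ι → ℤ))
      = Matrix.diagonal a * gram (fun i => (bO i : ι → ℤ)) * Matrix.diagonal a := by
    ext i j
    rw [Matrix.mul_diagonal, Matrix.diagonal_mul]
    simp only [gram, Matrix.of_apply]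
    rw [ha' i, ha' j, smul_dotProduct, dotProduct_smul, smul_eq_mul,
      smul_eq_mul]
    ring
  have hdet : covolSq Λ' = (∏ i, (a i)^2) * covolSq Λ := by
    rw [covolSq_eq _ bN, covolSq_eq _ bO, hgram, Matrix.det_mul, Matrix.det_mul,
      Matrix.det_diagonal, Finset.prod_pow]
    ring
  -- some a i is not a unit
  have hbig : ∃ i, ¬(a i = 1 ∨ a i = -1) := by
    by_contra hall
    push_neg at hall
    have hsub : Λ ≤ Λ' := by
      rw [← span_coe_basis bO]
      rw [Submodule.span_le]
      rintro x ⟨i, rfl⟩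
      have h2 : (a i) • ((bN i : ι → ℤ)) = ((bO i : ι → ℤ)) := by
        rw [ha' i, smul_smul]
        rcases hall i with h | h <;> rw [h] <;> simp
      show (bO i : ι → ℤ) ∈ Λ'
      rw [← h2]
      exact Λ'.smul_mem _ (bN i).2
    exact hne (le_antisymm hle hsub)
  obtain ⟨i₀, hi₀⟩ := hbig
  have h4 : 4 ≤ ∏ i, (a i)^2 := by
    have hterm : 4 ≤ (a i₀)^2 := by
      have h1 := ha0 i₀
      have h2 : a i₀ ≤ -2 ∨ 2 ≤ a i₀ := by
        rcases lt_trichotomy (a i₀) 0 with h | h | h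
        · left; by_contra hcon; push_neg at hcon
          interval_cases (a i₀) <;> simp_all
        · exact absurd h h1
        · right; by_contra hcon; push_neg at hcon
          interval_cases (a i₀) <;> simp_all
      rcases h2 with h | h <;> nlinarith
    have hrest : 1 ≤ ∏ i ∈ Finset.univ.erase i₀, (a i)^2 := by
      have h9 := Finset.prod_le_prod (s := Finset.univ.erase i₀) (f := fun _ => (1:ℤ))
        (g := fun i => (a i)^2) (fun i _ => zero_le_one)
        (fun i _ => by
          have h := ha0 i
          have h2 : 0 < (a i)^2 := by positivity
          show (1:ℤ) ≤ (a i)^2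
          omega)
      simpa using h9
    calc (4:ℤ) = 1 * 4 := by ring
      _ ≤ (∏ i ∈ Finset.univ.erase i₀, (a i)^2) * (a i₀)^2 := by
          apply mul_le_mul hrest hterm (by norm_num)
          exact le_trans zero_le_one hrest
      _ = ∏ i, (a i)^2 := Finset.prod_erase_mul _ _ (Finset.mem_univ i₀)
  constructor
  · rw [hdet]
    have hpos : (0:ℤ) ≤ covolSq Λ := le_trans zero_le_one (covolSq_pos Λ)
    exact mul_le_mul_of_nonneg_right h4 hpos
  · have e5 : Module.finrank ℤ ↥Λ = n := by
      rw [Module.finrank_eq_card_basis bO, Fintype.card_fin]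
    omega

lemma lattice_count {t : ℕ} (K : ℤ) (hK : 1 ≤ K) (v : Fin t → ι → ℤ)
    (hb : ∀ (j : Fin t) (i : ι), |v j i| ≤ K)
    (hs : ∀ j : Fin t, v j ∉ Submodule.span ℤ (v '' {i | (j : ℕ) < (i : ℕ)})) :
    (4 : ℤ) ^ t ≤ (4 * ((Fintype.card ι : ℤ) * K ^ 2)) ^ (Fintype.card ι) := by
  classical
  set Q : ℤ := (Fintype.card ι : ℤ) * K ^ 2 with hQ
  rcases Nat.eq_zero_or_pos t with ht | ht
  · subst ht
    rw [pow_zero]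
    rcases Nat.eq_zero_or_pos (Fintype.card ι) with hι | hι
    · rw [hι, pow_zero]
    · have h1 : (1:ℤ) ≤ (Fintype.card ι : ℤ) := by exact_mod_cast hι
      have h14 : (1:ℤ) ≤ 4 * Q := by nlinarith
      calc (1:ℤ) = 1 ^ (Fintype.card ι) := (one_pow _).symm
        _ ≤ (4 * Q) ^ (Fintype.card ι) := pow_le_pow_left₀ zero_le_one h14 _
  have hι : 1 ≤ Fintype.card ι := by
    by_contra hcon
    push_neg at hcon
    have hempty : IsEmpty ι := Fintype.card_eq_zero_iff.mp (by omega)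
    have j0 : Fin t := ⟨0, ht⟩
    apply hs j0
    have hz : v j0 = 0 := funext fun i => hempty.elim i
    rw [hz]
    exact Submodule.zero_mem _
  have hQ1 : (1:ℤ) ≤ Q := by
    have h1 : (1:ℤ) ≤ (Fintype.card ι : ℤ) := by exact_mod_cast hι
    nlinarith
  have h4Q : (1:ℤ) ≤ 4 * Q := by nlinarith
  set Λc : ℕ → Submodule ℤ (ι → ℤ) :=
    fun jn => Submodule.span ℤ (v '' {i : Fin t | jn ≤ (i : ℕ)}) with hΛc
  have hbot : Λc t = ⊥ := by
    have he : {i : Fin t | t ≤ (i : ℕ)} = ∅ := by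
      apply Set.eq_empty_iff_forall_notMem.mpr
      intro i hi
      simp only [Set.mem_setOf_eq] at hi
      omega
    rw [hΛc]
    simp only [he, Set.image_empty, Submodule.span_empty]
  have main : ∀ dlt : ℕ, dlt ≤ t →
      (4:ℤ)^dlt * covolSq (Λc (t - dlt)) ≤ (4 * Q) ^ (Module.finrank ℤ ↥(Λc (t - dlt))) := by
    intro dlt
    induction dlt with
    | zero =>
      intro _
      rw [Nat.sub_zero, hbot, pow_zero, one_mul, covolSq_bot, finrank_bot, pow_zero]
    | succ dlt ih =>
      intro hlt
      set j : ℕ := t - (dlt + 1) with hj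
      have hjt : j < t := by omega
      set jF : Fin t := ⟨j, hjt⟩ with hjF
      have hjFv : (jF : ℕ) = j := rfl
      have htd : t - dlt = j + 1 := by omega
      have hsetsplit : {i : Fin t | j ≤ (i : ℕ)} = {jF} ∪ {i : Fin t | j + 1 ≤ (i : ℕ)} := by
        ext i
        simp only [Set.mem_setOf_eq, Set.mem_union, Set.mem_singleton_iff, Fin.ext_iff, hjFv]
        omega
      have hsup : Λc j = (ℤ ∙ (v jF)) ⊔ Λc (j + 1) := by
        rw [hΛc]
        simp only [hsetsplit, Set.image_union, Set.image_singleton, Submodule.span_union]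
      have hnotmem : v jF ∉ Λc (j + 1) := by
        have h2 := hs jF
        have he : {i : Fin t | (jF : ℕ) < (i : ℕ)} = {i : Fin t | j + 1 ≤ (i : ℕ)} := by
          ext i
          simp only [Set.mem_setOf_eq, hjFv]
          omega
        rw [he] at h2
        exact h2
      have hmemj : v jF ∈ Λc j := Submodule.subset_span ⟨jF, show j ≤ (jF:ℕ) from le_rfl, rfl⟩
      have hle : Λc (j + 1) ≤ Λc j := by
        apply Submodule.span_mono
        apply Set.image_mono
        intro i hi
        simp only [Set.mem_setOf_eq] at hi ⊢
        omega
      have hstep := ih (by omega)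
      rw [htd] at hstep
      by_cases hex : ∃ Dc : ℤ, Dc ≠ 0 ∧ Dc • v jF ∈ Λc (j + 1)
      · obtain ⟨Dc, hD0, hDv⟩ := hex
        have hne : Λc (j + 1) ≠ Λc j := by
          intro h
          rw [← h] at hmemj
          exact hnotmem hmemj
        have hmul : ∀ x ∈ Λc j, Dc • x ∈ Λc (j + 1) := by
          intro x hx
          rw [hsup] at hx
          obtain ⟨y, hy, z, hz, rfl⟩ := Submodule.mem_sup.mp hx
          obtain ⟨aa, rfl⟩ := Submodule.mem_span_singleton.mp hy
          rw [smul_add]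
          apply Submodule.add_mem
          · rw [smul_comm]
            exact Submodule.smul_mem _ _ hDv
          · exact Submodule.smul_mem _ _ hz
        obtain ⟨hcov, hrank⟩ := tors_step (Λc j) (Λc (j + 1)) hle hne Dc hD0 hmul
        calc (4:ℤ)^(dlt+1) * covolSq (Λc j)
            = (4:ℤ)^dlt * (4 * covolSq (Λc j)) := by ring
          _ ≤ (4:ℤ)^dlt * covolSq (Λc (j+1)) :=
              mul_le_mul_of_nonneg_left hcov (by positivity)
          _ ≤ (4 * Q) ^ (Module.finrank ℤ ↥(Λc (j+1))) := hstep
          _ = (4 * Q) ^ (Module.finrank ℤ ↥(Λc j)) := by rw [hrank]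
      · push_neg at hex
        obtain ⟨hcov, hrank⟩ := up_step (Λc (j + 1)) (v jF) hex
        have hsup' : Λc j = Λc (j + 1) ⊔ (ℤ ∙ (v jF)) := by rw [hsup, sup_comm]
        have hvv : (v jF) ⬝ᵥ (v jF) ≤ Q := by
          rw [hQ]
          have h1 : ∀ i : ι, (v jF i) * (v jF i) ≤ K^2 := by
            intro i
            have h2 := hb jF i
            nlinarith [neg_abs_le (v jF i), le_abs_self (v jF i), abs_nonneg (v jF i)]
          calc (v jF) ⬝ᵥ (v jF) = ∑ i, (v jF i) * (v jF i) := rfl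
            _ ≤ ∑ _i : ι, K^2 := Finset.sum_le_sum (fun i _ => h1 i)
            _ = (Fintype.card ι : ℤ) * K^2 := by
                rw [Finset.sum_const, Finset.card_univ, nsmul_eq_mul]
        have hvvnn : (0:ℤ) ≤ (v jF) ⬝ᵥ (v jF) := Finset.sum_nonneg fun i _ => mul_self_nonneg _
        calc (4:ℤ)^(dlt+1) * covolSq (Λc j)
            ≤ (4:ℤ)^(dlt+1) * ((v jF ⬝ᵥ v jF) * covolSq (Λc (j+1))) := by
              apply mul_le_mul_of_nonneg_left _ (by positivity)
              rw [hsup']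
              exact hcov
          _ = (4 * (v jF ⬝ᵥ v jF)) * ((4:ℤ)^dlt * covolSq (Λc (j+1))) := by ring
          _ ≤ (4 * Q) * ((4 * Q) ^ (Module.finrank ℤ ↥(Λc (j+1)))) := by
              have hnn2 : (0:ℤ) ≤ (4:ℤ)^dlt * covolSq (Λc (j+1)) := by
                have := covolSq_pos (Λc (j+1))
                positivity
              apply mul_le_mul (by linarith) hstep hnn2 (by linarith)
          _ = (4 * Q) ^ (Module.finrank ℤ ↥(Λc j)) := by
              rw [← pow_succ']
              congr 1
              rw [hsup', hrank]
  have hfin := main t le_rfl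
  rw [Nat.sub_self] at hfin
  have h1 : (4:ℤ)^t ≤ (4:ℤ)^t * covolSq (Λc 0) :=
    le_mul_of_one_le_right (by positivity) (covolSq_pos _)
  have h2 : (4 * Q) ^ (Module.finrank ℤ ↥(Λc 0)) ≤ (4 * Q) ^ (Fintype.card ι) := by
    apply pow_le_pow_right₀ h4Q
    have h3 : Module.finrank ℤ ↥(Λc 0) ≤ Module.finrank ℤ (ι → ℤ) := Submodule.finrank_le _
    rwa [Module.finrank_pi] at h3
  exact le_trans (le_trans h1 hfin) h2

end NZP

end NZPLattice

private lemma one_le_pow_aux {R : Type*} [Semiring R] [PartialOrder R] [IsOrderedRing R] {a : R} (h : 1 ≤ a) (n : ℕ) :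
    1 ≤ a ^ n := by
  calc (1:R) = 1 ^ n := (one_pow n).symm
    _ ≤ a ^ n := pow_le_pow_left₀ zero_le_one h n

/-- Nelson's theorem on zero patterns of integer polynomials. -/
theorem nelson_zero_patterns (c d N m : ℕ) (hc : 0 < c) (hd : 0 < d) (hN : 0 < N) (hm : 0 < m)
    (f : Fin N → MvPolynomial (Fin m) ℤ)
    (hdeg : ∀ i : Fin N, (f i).totalDegree ≤ d)
    (hcoeff : ∀ (i : Fin N) (mono : Fin m →₀ ℕ), |(f i).coeff mono| ≤ (c : ℤ))
    (r : ℕ) (hr : 0 < r)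
    (hbound : ((N * d + m).choose m : ℝ) *
        (Real.logb 2 (3 * r) + (N : ℝ) * Real.logb 2 ((c : ℝ) * (Real.exp 1 * N) ^ d)) <
      (r : ℝ)) :
    Set.ncard {S : Finset (Fin N) | RealizableSet f S} ≤ r := by
  classical
  have hfin : {S : Finset (Fin N) | RealizableSet f S}.Finite := Set.toFinite _
  set t := Set.ncard {S : Finset (Fin N) | RealizableSet f S} with ht
  set F' : Finset (Colex (Finset (Fin N))) :=
    hfin.toFinset.image toColex with hF'
  have hcard : F'.card = t := by
    rw [hF', Finset.card_image_of_injective _ toColex.injective]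
    exact (Set.ncard_eq_toFinset_card _ hfin).symm
  set e := F'.orderEmbOfFin hcard with he
  set S : Fin t → Finset (Fin N) := fun j => ofColex (e j) with hSdef
  have hSreal : ∀ j, RealizableSet f (S j) := by
    intro j
    have h1 : e j ∈ F' := Finset.orderEmbOfFin_mem _ hcard j
    rw [hF', Finset.mem_image] at h1
    obtain ⟨A, hA, hAe⟩ := h1
    rw [Set.Finite.mem_toFinset] at hA
    have h2 : S j = A := by
      show ofColex (e j) = A
      rw [← hAe]; rfl
    rw [h2]
    exact hA
  have horder : ∀ i j : Fin t, j < i → ¬ (S i ⊆ S j) := by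
    intro i j hij hsub
    have h1 : e j < e i := (F'.orderEmbOfFin hcard).strictMono hij
    have h1' : toColex (S j) < toColex (S i) := by
      rw [hSdef]
      simpa using h1
    have h2 : toColex (S i) ≤ toColex (S j) :=
      Finset.Colex.toColex_le_toColex_of_subset hsub
    exact absurd h2 (not_le_of_gt h1')
  -- products
  set g : Fin t → MvPolynomial (Fin m) ℤ := fun j => ∏ i ∈ S j, f i with hgdef
  have hEval : ∀ j : Fin t, ∃ (k : Type) (fld : Field k),
      letI := fld
      ∃ (φ : MvPolynomial (Fin m) ℤ →+* k),
        φ (g j) ≠ 0 ∧ ∀ i : Fin t, ¬ (S i ⊆ S j) → φ (g i) = 0 := by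
    intro j
    obtain ⟨k, fld, u, hu⟩ := hSreal j
    letI := fld
    refine ⟨k, fld, (MvPolynomial.eval u).comp (MvPolynomial.map (Int.castRingHom k)), ?_, ?_⟩
    · rw [hgdef]
      rw [map_prod]
      apply Finset.prod_ne_zero_iff.mpr
      intro i hi
      exact (hu i).mp hi
    · intro i hnsub
      obtain ⟨i0, hi0S, hi0not⟩ := Finset.not_subset.mp hnsub
      rw [hgdef]
      rw [map_prod]
      apply Finset.prod_eq_zero hi0S
      by_contra hne
      exact hi0not ((hu i0).mpr hne)
  have hgdeg : ∀ j, (g j).totalDegree ≤ N * d := by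
    intro j
    refine le_trans (MvPolynomial.totalDegree_finset_prod _ _) ?_
    calc ∑ i ∈ S j, (f i).totalDegree ≤ ∑ _i ∈ S j, d := Finset.sum_le_sum fun i _ => hdeg i
      _ = (S j).card * d := by rw [Finset.sum_const, smul_eq_mul]
      _ ≤ N * d := by
          apply Nat.mul_le_mul_right
          calc (S j).card ≤ (Finset.univ : Finset (Fin N)).card := Finset.card_le_univ _
            _ = N := by rw [Finset.card_univ, Fintype.card_fin]
  set T : Finset (Fin m →₀ ℕ) := Finset.univ.biUnion (fun j : Fin t => (g j).support) with hT
  have hTdeg : ∀ μ ∈ T, (μ.sum fun _ x => x) ≤ N * d := by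
    intro μ hμ
    rw [hT, Finset.mem_biUnion] at hμ
    obtain ⟨j, _, hj⟩ := hμ
    exact le_trans (MvPolynomial.le_totalDegree hj) (hgdeg j)
  have hTsupp : ∀ j : Fin t, (g j).support ⊆ T := by
    intro j
    rw [hT]
    intro μ hμ
    exact Finset.mem_biUnion.mpr ⟨j, Finset.mem_univ j, hμ⟩
  set K : ℤ := (c : ℤ) ^ N * (N : ℤ) ^ (N * d) with hKdef
  have hc1 : (1 : ℤ) ≤ (c : ℤ) := by exact_mod_cast hc
  have hN1 : (1 : ℤ) ≤ (N : ℤ) := by exact_mod_cast hN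
  have hK1 : (1 : ℤ) ≤ K := by
    rw [hKdef]
    have h1 : (1:ℤ) ≤ (c:ℤ)^N := one_le_pow_aux hc1 N
    have h2 : (1:ℤ) ≤ (N:ℤ)^(N*d) := one_le_pow_aux hN1 (N*d)
    nlinarith
  set v : Fin t → (↥T → ℤ) := fun j μ => (g j).coeff μ.1 with hvdef
  have hb : ∀ (j : Fin t) (μ : ↥T), |v j μ| ≤ K := by
    intro j μ
    have h1 := coeff_prod_bound f (c : ℤ) hcoeff (S j) μ.1
    refine le_trans h1 ?_
    rw [hKdef]
    have hcardN : (S j).card ≤ N := by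
      calc (S j).card ≤ (Finset.univ : Finset (Fin N)).card := Finset.card_le_univ _
        _ = N := by rw [Finset.card_univ, Fintype.card_fin]
    have h2 : (c:ℤ) ^ (S j).card ≤ (c:ℤ) ^ N := pow_le_pow_right₀ hc1 hcardN
    have h3 : ((S j).card : ℤ) ^ (μ.1.sum fun _ x => x) ≤ (N : ℤ) ^ (N * d) := by
      calc ((S j).card : ℤ) ^ (μ.1.sum fun _ x => x) ≤ (N : ℤ) ^ (μ.1.sum fun _ x => x) := by
            apply pow_le_pow_left₀ (by positivity)
            exact_mod_cast hcardN
        _ ≤ (N : ℤ) ^ (N * d) := pow_le_pow_right₀ hN1 (hTdeg μ.1 μ.2)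
    have h4 : (0:ℤ) ≤ ((S j).card : ℤ) ^ (μ.1.sum fun _ x => x) := by positivity
    have h5 : (0:ℤ) ≤ (c:ℤ) ^ N := by positivity
    exact mul_le_mul h2 h3 h4 h5
  have hs : ∀ j : Fin t, v j ∉ Submodule.span ℤ (v '' {i | (j : ℕ) < (i : ℕ)}) := by
    intro j hmem
    rw [Set.image_eq_range] at hmem
    rw [Submodule.mem_span_range_iff_exists_fun] at hmem
    obtain ⟨cf, hcf⟩ := hmem
    have hpoly : g j = ∑ i : ↥{i : Fin t | (j : ℕ) < (i : ℕ)}, cf i • g i.1 := by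
      apply MvPolynomial.ext
      intro μ
      have hcoeffsum : (∑ i : ↥{i : Fin t | (j : ℕ) < (i : ℕ)}, cf i • g i.1).coeff μ
          = ∑ i : ↥{i : Fin t | (j : ℕ) < (i : ℕ)}, cf i * (g i.1).coeff μ := by
        rw [MvPolynomial.coeff_sum]
        apply Finset.sum_congr rfl
        intro i _
        rw [MvPolynomial.coeff_smul, smul_eq_mul]
      by_cases hμ : μ ∈ T
      · have h1 := congrFun hcf ⟨μ, hμ⟩
        simp only [Finset.sum_apply, Pi.smul_apply, smul_eq_mul] at h1
        rw [hcoeffsum]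
        exact h1.symm
      · have hzero : ∀ i : Fin t, (g i).coeff μ = 0 := by
          intro i
          by_contra hne
          exact hμ (hTsupp i (MvPolynomial.mem_support_iff.mpr hne))
        rw [hcoeffsum, hzero j]
        apply (Finset.sum_eq_zero ?_).symm
        intro i _
        rw [hzero i.1, mul_zero]
    obtain ⟨k, fld, hrest⟩ := hEval j
    letI := fld
    obtain ⟨φ, hφj, hφi⟩ := hrest
    apply hφj
    rw [hpoly, map_sum]
    apply Finset.sum_eq_zero
    intro i _
    have hzs : φ (cf i • g i.1) = cf i • φ (g i.1) := map_zsmul φ _ _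
    rw [hzs, hφi i.1 (horder i.1 j i.2), smul_zero]
  -- apply the lattice counting lemma
  have hlat := NZP.lattice_count K hK1 v hb hs
  rw [Fintype.card_coe] at hlat
  -- now the numerics
  set Bn : ℕ := (N * d + m).choose m with hBn
  have hn'B : T.card ≤ Bn := card_le_choose T hTdeg
  have hBn1 : 1 ≤ Bn := Nat.choose_pos (by omega)
  -- real versions
  set KR : ℝ := (c : ℝ) ^ N * (N : ℝ) ^ (N * d) with hKR
  have hc1R : (1:ℝ) ≤ (c:ℝ) := by exact_mod_cast hc
  have hN1R : (1:ℝ) ≤ (N:ℝ) := by exact_mod_cast hN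
  have hr1R : (1:ℝ) ≤ (r:ℝ) := by exact_mod_cast hr
  have hKR1 : (1:ℝ) ≤ KR := by
    rw [hKR]
    have h1 : (1:ℝ) ≤ (c:ℝ)^N := one_le_pow_aux hc1R N
    have h2 : (1:ℝ) ≤ (N:ℝ)^(N*d) := one_le_pow_aux hN1R (N*d)
    nlinarith
  have hKcast : ((K : ℤ) : ℝ) = KR := by
    rw [hKdef, hKR]
    push_cast
    ring
  set X : ℝ := 3 * r * ((c : ℝ) * (Real.exp 1 * N) ^ d) ^ N with hX
  have hcEN1 : (1:ℝ) ≤ (c : ℝ) * (Real.exp 1 * N) ^ d := by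
    have he1 : (1:ℝ) ≤ Real.exp 1 := Real.one_le_exp zero_le_one
    have h1 : (1:ℝ) ≤ Real.exp 1 * N := by nlinarith
    have h2 : (1:ℝ) ≤ (Real.exp 1 * N)^d := one_le_pow_aux h1 d
    nlinarith
  have hXpos : (0:ℝ) < X := by
    rw [hX]
    have : (0:ℝ) < (c : ℝ) * (Real.exp 1 * N) ^ d := lt_of_lt_of_le zero_lt_one hcEN1
    positivity
  -- B ≤ r
  have hbracket : (1:ℝ) ≤ Real.logb 2 (3 * r) + (N : ℝ) * Real.logb 2 ((c : ℝ) * (Real.exp 1 * N) ^ d) := by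
    have h1 : (1:ℝ) ≤ Real.logb 2 (3 * r) := by
      have h2 : Real.logb 2 2 ≤ Real.logb 2 (3 * r) := by
        apply (Real.logb_le_logb (by norm_num) (by norm_num) (by nlinarith)).mpr
        nlinarith
      rwa [Real.logb_self_eq_one (by norm_num)] at h2
    have h3 : (0:ℝ) ≤ (N : ℝ) * Real.logb 2 ((c : ℝ) * (Real.exp 1 * N) ^ d) := by
      apply mul_nonneg (by positivity)
      exact Real.logb_nonneg (by norm_num) hcEN1
    linarith
  have hBr : (Bn : ℝ) ≤ (r : ℝ) := by
    have h1 : (Bn : ℝ) * 1 ≤ (Bn : ℝ) *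
        (Real.logb 2 (3 * r) + (N : ℝ) * Real.logb 2 ((c : ℝ) * (Real.exp 1 * N) ^ d)) :=
      mul_le_mul_of_nonneg_left hbracket (by positivity)
    rw [mul_one] at h1
    rw [hBn]
    exact le_of_lt (lt_of_le_of_lt h1 hbound)
  -- chain of inequalities
  have step1 : (4:ℝ)^t ≤ (4 * ((T.card : ℝ) * KR^2))^(T.card) := by
    rw [hKdef] at hlat
    rw [hKR]
    exact_mod_cast hlat
  clear_value v g S e F' T t K
  have hbase1 : (1:ℝ) ≤ 4 * ((Bn : ℝ) * KR^2) := by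
    have h1 : (1:ℝ) ≤ (Bn : ℝ) := by exact_mod_cast hBn1
    nlinarith
  have step2 : (4:ℝ)^t ≤ (4 * ((Bn : ℝ) * KR^2))^Bn := by
    have hmid : (4 * ((T.card : ℝ) * KR^2))^(T.card) ≤ (4 * ((Bn : ℝ) * KR^2))^(T.card) := by
      apply pow_le_pow_left₀ (by positivity)
      have h1 : (T.card : ℝ) ≤ (Bn : ℝ) := by exact_mod_cast hn'B
      nlinarith
    have hmid2 : (4 * ((Bn : ℝ) * KR^2))^(T.card) ≤ (4 * ((Bn : ℝ) * KR^2))^Bn :=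
      pow_le_pow_right₀ hbase1 hn'B
    exact le_trans step1 (le_trans hmid hmid2)
  have hXeq : ((c : ℝ) * (Real.exp 1 * N) ^ d) ^ N = KR * (Real.exp 1) ^ (d * N) := by
    rw [mul_pow, ← pow_mul, mul_pow, hKR, Nat.mul_comm d N]
    ring
  have hE1 : (1:ℝ) ≤ (Real.exp 1) ^ (d * N) :=
    one_le_pow_aux (Real.one_le_exp zero_le_one) (d * N)
  have step3 : 4 * ((Bn : ℝ) * KR^2) ≤ X^2 := by
    have hX2 : X^2 = 9 * (r:ℝ)^2 * ((Real.exp 1) ^ (d * N))^2 * KR^2 := by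
      rw [hX, hXeq]
      ring
    rw [hX2]
    have h1 : 4 * (Bn : ℝ) ≤ 9 * (r:ℝ)^2 * ((Real.exp 1) ^ (d * N))^2 := by
      have hE2 : (1:ℝ) ≤ ((Real.exp 1) ^ (d * N))^2 := one_le_pow_aux hE1 2
      have h9 : 9*(r:ℝ)^2 ≤ 9*(r:ℝ)^2 * ((Real.exp 1) ^ (d * N))^2 :=
        le_mul_of_one_le_right (by positivity) hE2
      nlinarith [hBr, hr1R]
    nlinarith [sq_nonneg KR, hKR1]
  have step4 : (4:ℝ)^t ≤ (X^2)^Bn :=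
    le_trans step2 (pow_le_pow_left₀ (by positivity) step3 Bn)
  have step5 : (2:ℝ)^t ≤ X^Bn := by
    have h1 : ((2:ℝ)^t)^2 ≤ (X^Bn)^2 := by
      calc ((2:ℝ)^t)^2 = (4:ℝ)^t := by
            rw [← pow_mul, Nat.mul_comm, pow_mul]
            norm_num
        _ ≤ (X^2)^Bn := step4
        _ = (X^Bn)^2 := by rw [← pow_mul, Nat.mul_comm, pow_mul]
    exact (pow_le_pow_iff_left₀ (by positivity) (by positivity) two_ne_zero).mp h1
  have step6 : (t : ℝ) ≤ (Bn : ℝ) * Real.logb 2 X := by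
    have h1 : Real.logb 2 ((2:ℝ)^t) ≤ Real.logb 2 (X^Bn) :=
      (Real.logb_le_logb (by norm_num) (by positivity) (by positivity)).mpr step5
    rw [Real.logb_pow, Real.logb_pow, Real.logb_self_eq_one (by norm_num), mul_one] at h1
    exact h1
  have hlogX : Real.logb 2 X = Real.logb 2 (3 * r)
      + (N : ℝ) * Real.logb 2 ((c : ℝ) * (Real.exp 1 * N) ^ d) := by
    rw [hX, Real.logb_mul (by nlinarith) (by positivity), Real.logb_pow]
  have final : (t : ℝ) < (r : ℝ) := by
    rw [hlogX] at step6
    exact lt_of_le_of_lt step6 hbound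
  have : t < r := by exact_mod_cast final
  omega
end
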